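/- arXiv:2109.07477 — 5 statements merged into one kernel-verified Lean document; each statement's English description precedes it below -/
import Mathlib

section
/- Let k₀ > 0, let p = (p₁, p₂, 0) ∈ ℝ³, and let F : ℝ² → ℂ be a continuous function whose (compact) support is contained in the open disk {(k₁,k₂) : k₁² + k₂² < k₀²}. Define g : ℝ² → ℂ³ by g(k₁,k₂) = (1/2)·F(k₁,k₂)·(p₁, p₂, (p₁k₁ + p₂k₂)/√(k₀² − k₁² − k₂²)), and for a fixed r₀ ∈ ℝ define the downward-propagating field E⁽⁰⁾ : ℝ³ → ℂ³ by E⁽⁰⁾(x) = (1/(4π²)) ∫_{ℝ²} g(k₁,k₂) e^{−i(k₁x₁ + k₂x₂)} e^{−i√(k₀²−k₁²−k₂²)(r₀−x₃)} d(k₁,k₂). Then E⁽⁰⁾ solves the homogeneous Helmholtz system: for every x ∈ ℝ³ and every component j ∈ {1,2,3}, ΔE⁽⁰⁾_j(x) + k₀² E⁽⁰⁾_j(x) = 0, and E⁽⁰⁾ is divergence-free: ∂E⁽⁰⁾₁/∂x₁ + ∂E⁽⁰⁾₂/∂x₂ + ∂E⁽⁰⁾₃/∂x₃ = 0. -/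
open MeasureTheory

/-- Partial derivative of a complex-valued function on ℝ³ in the `i`-th coordinate
direction. -/
noncomputable def pd (f : (Fin 3 → ℝ) → ℂ) (i : Fin 3) (x : Fin 3 → ℝ) : ℂ :=
  fderiv ℝ f x (Pi.single i 1)

open Set

lemma oneD (a : ℝ) (ha : 0 < a) :
    IntegrableOn (fun t : ℝ => 1 / Real.sqrt (a^2 - t^2)) (Set.Ioo (-a) a) volume ∧
    ∫ t in Set.Ioo (-a) a, 1 / Real.sqrt (a^2 - t^2) ≤ 4 := by
  have hrpow : IntervalIntegrable (fun x : ℝ => x ^ (-(1/2) : ℝ)) volume 0 a :=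
    intervalIntegral.intervalIntegrable_rpow' (by norm_num)
  have hR : IntervalIntegrable (fun t => (a - t) ^ (-(1/2) : ℝ)) volume 0 a := by
    simpa using (hrpow.comp_sub_left a).symm
  have hL : IntervalIntegrable (fun t => (a + t) ^ (-(1/2) : ℝ)) volume (-a) 0 := by
    simpa using hrpow.comp_add_left a
  have hsa : (0:ℝ) < Real.sqrt a := Real.sqrt_pos.2 ha
  have hrval : ∫ x in (0:ℝ)..a, x ^ (-(1/2) : ℝ) = 2 * Real.sqrt a := by
    rw [integral_rpow (Or.inl (by norm_num))]
    rw [Real.zero_rpow (by norm_num), Real.sqrt_eq_rpow]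
    ring
  have hRval : ∫ t in (0:ℝ)..a, (a - t) ^ (-(1/2) : ℝ) = 2 * Real.sqrt a := by
    rw [intervalIntegral.integral_comp_sub_left (fun x => x ^ (-(1/2) : ℝ)) a]
    simpa using hrval
  have hLval : ∫ t in (-a:ℝ)..0, (a + t) ^ (-(1/2) : ℝ) = 2 * Real.sqrt a := by
    rw [intervalIntegral.integral_comp_add_left (fun x => x ^ (-(1/2) : ℝ)) a]
    simpa using hrval
  set f : ℝ → ℝ := fun t => 1 / Real.sqrt (a^2 - t^2) with hf
  have hfnn : ∀ t, 0 ≤ f t := fun t => one_div_nonneg.2 (Real.sqrt_nonneg _)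
  have hfmeas : Measurable f := by
    have : Measurable fun t : ℝ => (Real.sqrt (a^2 - t^2))⁻¹ :=
      (Real.continuous_sqrt.comp (by fun_prop)).measurable.inv
    simpa [hf, one_div] using this
  -- pointwise bounds
  have hptR : ∀ t ∈ Ioc (0:ℝ) a, f t ≤ (1 / Real.sqrt a) * (a - t) ^ (-(1/2) : ℝ) := by
    rintro t ⟨ht0, hta⟩
    rcases eq_or_lt_of_le hta with heq | hlt
    · rw [heq]
      have h0 : a^2 - a^2 = 0 := by ring
      simp [hf, h0, Real.zero_rpow (by norm_num : (-(1/2):ℝ) ≠ 0)]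
    · have h1 : 0 < a - t := by linarith
      have h2 : 0 < a * (a - t) := by positivity
      have h3 : a * (a - t) ≤ a^2 - t^2 := by nlinarith
      have hr : (a - t) ^ (-(1/2) : ℝ) = 1 / Real.sqrt (a - t) := by
        rw [Real.rpow_neg h1.le, Real.sqrt_eq_rpow]; norm_num
      rw [hr, hf]
      have hs : Real.sqrt (a * (a - t)) ≤ Real.sqrt (a^2 - t^2) := Real.sqrt_le_sqrt h3
      have hsp : 0 < Real.sqrt (a * (a - t)) := Real.sqrt_pos.2 h2
      calc 1 / Real.sqrt (a^2 - t^2) ≤ 1 / Real.sqrt (a * (a - t)) :=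
            one_div_le_one_div_of_le hsp hs
        _ = 1 / Real.sqrt a * (1 / Real.sqrt (a - t)) := by
            rw [Real.sqrt_mul ha.le]; ring
  have hptL : ∀ t ∈ Ioc (-a) (0:ℝ), f t ≤ (1 / Real.sqrt a) * (a + t) ^ (-(1/2) : ℝ) := by
    rintro t ⟨ht0, hta⟩
    have h1 : 0 < a + t := by linarith
    have h2 : 0 < a * (a + t) := by positivity
    have h3 : a * (a + t) ≤ a^2 - t^2 := by nlinarith
    have hr : (a + t) ^ (-(1/2) : ℝ) = 1 / Real.sqrt (a + t) := by
      rw [Real.rpow_neg h1.le, Real.sqrt_eq_rpow]; norm_num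
    rw [hr, hf]
    have hs : Real.sqrt (a * (a + t)) ≤ Real.sqrt (a^2 - t^2) := Real.sqrt_le_sqrt h3
    have hsp : 0 < Real.sqrt (a * (a + t)) := Real.sqrt_pos.2 h2
    calc 1 / Real.sqrt (a^2 - t^2) ≤ 1 / Real.sqrt (a * (a + t)) :=
          one_div_le_one_div_of_le hsp hs
      _ = 1 / Real.sqrt a * (1 / Real.sqrt (a + t)) := by
          rw [Real.sqrt_mul ha.le]; ring
  -- integrability on each piece
  have hgR : IntegrableOn (fun t => (1 / Real.sqrt a) * (a - t) ^ (-(1/2) : ℝ)) (Ioc 0 a) :=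
    (hR.1).const_mul _
  have hgL : IntegrableOn (fun t => (1 / Real.sqrt a) * (a + t) ^ (-(1/2) : ℝ)) (Ioc (-a) 0) :=
    (hL.1).const_mul _
  have hIntR : IntegrableOn f (Ioc 0 a) := by
    refine Integrable.mono' hgR hfmeas.aestronglyMeasurable ?_
    refine (ae_restrict_iff' measurableSet_Ioc).2 (Filter.Eventually.of_forall fun t ht => ?_)
    rw [Real.norm_of_nonneg (hfnn t)]
    exact hptR t ht
  have hIntL : IntegrableOn f (Ioc (-a) 0) := by
    refine Integrable.mono' hgL hfmeas.aestronglyMeasurable ?_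
    refine (ae_restrict_iff' measurableSet_Ioc).2 (Filter.Eventually.of_forall fun t ht => ?_)
    rw [Real.norm_of_nonneg (hfnn t)]
    exact hptL t ht
  have hunion : Ioc (-a) (0:ℝ) ∪ Ioc 0 a = Ioc (-a) a :=
    Set.Ioc_union_Ioc_eq_Ioc (by linarith) (by linarith)
  have hIntAll : IntegrableOn f (Ioc (-a) a) := by
    rw [← hunion]; exact hIntL.union hIntR
  have hIntIoo : IntegrableOn f (Ioo (-a) a) := hIntAll.mono_set Set.Ioo_subset_Ioc_self
  refine ⟨hIntIoo, ?_⟩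
  have step1 : ∫ t in Ioo (-a) a, f t ≤ ∫ t in Ioc (-a) a, f t := by
    refine setIntegral_mono_set hIntAll ?_ (HasSubset.Subset.eventuallyLE Set.Ioo_subset_Ioc_self)
    exact Filter.Eventually.of_forall hfnn
  have step2 : ∫ t in Ioc (-a) a, f t = (∫ t in Ioc (-a) 0, f t) + ∫ t in Ioc 0 a, f t := by
    rw [← hunion, setIntegral_union (Set.Ioc_disjoint_Ioc_of_le le_rfl) measurableSet_Ioc hIntL hIntR]
  have stepR : ∫ t in Ioc (0:ℝ) a, f t ≤ 2 := by
    calc ∫ t in Ioc (0:ℝ) a, f t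
        ≤ ∫ t in Ioc (0:ℝ) a, (1 / Real.sqrt a) * (a - t) ^ (-(1/2) : ℝ) :=
          setIntegral_mono_on hIntR hgR measurableSet_Ioc hptR
      _ = (1 / Real.sqrt a) * ∫ t in (0:ℝ)..a, (a - t) ^ (-(1/2) : ℝ) := by
          rw [intervalIntegral.integral_of_le ha.le, integral_const_mul]
      _ = 2 := by rw [hRval]; field_simp
  have stepL : ∫ t in Ioc (-a) (0:ℝ), f t ≤ 2 := by
    calc ∫ t in Ioc (-a) (0:ℝ), f t
        ≤ ∫ t in Ioc (-a) (0:ℝ), (1 / Real.sqrt a) * (a + t) ^ (-(1/2) : ℝ) :=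
          setIntegral_mono_on hIntL hgL measurableSet_Ioc hptL
      _ = (1 / Real.sqrt a) * ∫ t in (-a:ℝ)..0, (a + t) ^ (-(1/2) : ℝ) := by
          rw [intervalIntegral.integral_of_le (by linarith), integral_const_mul]
      _ = 2 := by rw [hLval]; field_simp
  linarith

lemma integrable_B (k₀ : ℝ) (hk₀ : 0 < k₀) :
    Integrable (fun k : ℝ × ℝ =>
      Set.indicator {k : ℝ × ℝ | k.1^2 + k.2^2 < k₀^2}
        (fun k => 1 / Real.sqrt (k₀^2 - k.1^2 - k.2^2)) k) := by
  set D : Set (ℝ × ℝ) := {k : ℝ × ℝ | k.1^2 + k.2^2 < k₀^2} with hD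
  have hDopen : IsOpen D := isOpen_lt (by fun_prop) continuous_const
  set B : ℝ × ℝ → ℝ := Set.indicator D (fun k => 1 / Real.sqrt (k₀^2 - k.1^2 - k.2^2)) with hB
  have hBnn : ∀ k, 0 ≤ B k :=
    fun k => Set.indicator_nonneg (fun k _ => one_div_nonneg.2 (Real.sqrt_nonneg _)) k
  have hBmeas : AEStronglyMeasurable B (volume : Measure (ℝ × ℝ)) := by
    refine (Measurable.indicator ?_ hDopen.measurableSet).aestronglyMeasurable
    have : Measurable fun k : ℝ × ℝ => (Real.sqrt (k₀^2 - k.1^2 - k.2^2))⁻¹ :=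
      (Real.continuous_sqrt.comp (by fun_prop)).measurable.inv
    simpa [one_div] using this
  -- description of slices
  have hslice : ∀ x : ℝ, x^2 < k₀^2 →
      (fun y => B (x, y)) = Set.indicator (Ioo (-(Real.sqrt (k₀^2 - x^2))) (Real.sqrt (k₀^2 - x^2)))
        (fun y => 1 / Real.sqrt ((Real.sqrt (k₀^2 - x^2))^2 - y^2)) := by
    intro x hx
    set a := Real.sqrt (k₀^2 - x^2) with hadef
    have ha2 : a^2 = k₀^2 - x^2 := Real.sq_sqrt (by linarith)
    funext y
    have hmem : (x, y) ∈ D ↔ y ∈ Ioo (-a) a := by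
      constructor
      · intro h
        have h' : x^2 + y^2 < k₀^2 := h
        have hy2 : y^2 < a^2 := by rw [ha2]; linarith
        have hann : (0:ℝ) ≤ a := Real.sqrt_nonneg _
        constructor
        · nlinarith [hy2, hann]
        · nlinarith [hy2, hann]
      · rintro ⟨h1, h2⟩
        show x^2 + y^2 < k₀^2
        nlinarith [Real.sqrt_nonneg (k₀^2 - x^2)]
    by_cases h : (x, y) ∈ D
    · rw [hB, Set.indicator_of_mem h, Set.indicator_of_mem (hmem.1 h)]
      have : k₀^2 - x^2 - y^2 = a^2 - y^2 := by rw [ha2]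
      rw [this]
    · rw [hB, Set.indicator_of_notMem h, Set.indicator_of_notMem (fun hc => h (hmem.2 hc))]
  have hslice0 : ∀ x : ℝ, ¬ (x^2 < k₀^2) → (fun y => B (x, y)) = fun _ => (0:ℝ) := by
    intro x hx
    funext y
    rw [hB]
    refine Set.indicator_of_notMem (fun hc => hx ?_) _
    have : x^2 + y^2 < k₀^2 := hc
    nlinarith [sq_nonneg y]
  rw [show (volume : Measure (ℝ × ℝ)) = (volume : Measure ℝ).prod volume from Measure.volume_eq_prod _ _] at *
  refine (integrable_prod_iff hBmeas).2 ⟨?_, ?_⟩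
  · refine Filter.Eventually.of_forall fun x => ?_
    by_cases hx : x^2 < k₀^2
    · rw [hslice x hx]
      have ha : 0 < Real.sqrt (k₀^2 - x^2) := Real.sqrt_pos.2 (by linarith)
      exact ((oneD _ ha).1).integrable_indicator measurableSet_Ioo
    · rw [hslice0 x hx]; exact integrable_zero _ _ _
  · have hbd : Integrable (Set.indicator (Ioo (-k₀) k₀) (fun _ : ℝ => (4:ℝ))) volume :=
      (integrableOn_const measure_Ioo_lt_top.ne).integrable_indicator measurableSet_Ioo
    refine Integrable.mono' hbd hBmeas.norm.integral_prod_right' ?_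
    refine Filter.Eventually.of_forall fun x => ?_
    have hnn : 0 ≤ ∫ y, ‖B (x, y)‖ := integral_nonneg fun y => norm_nonneg _
    rw [Real.norm_of_nonneg hnn]
    by_cases hx : x^2 < k₀^2
    · have hxmem : x ∈ Ioo (-k₀) k₀ := by
        constructor <;> nlinarith [le_abs_self x, neg_abs_le x]
      rw [Set.indicator_of_mem hxmem]
      have ha : 0 < Real.sqrt (k₀^2 - x^2) := Real.sqrt_pos.2 (by linarith)
      set a := Real.sqrt (k₀^2 - x^2)
      have hcalc : ∫ y, ‖B (x, y)‖ = ∫ y in Ioo (-a) a, 1 / Real.sqrt (a^2 - y^2) := by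
        have hnorm : (fun y => ‖B (x, y)‖) = fun y => B (x, y) := by
          funext y; exact Real.norm_of_nonneg (hBnn _)
        rw [hnorm, hslice x hx, integral_indicator measurableSet_Ioo]
      rw [hcalc]
      exact (oneD a ha).2
    · have : (fun y => ‖B (x, y)‖) = fun _ => (0:ℝ) := by
        funext y
        have h0 : B (x, y) = 0 := by simpa using congrFun (hslice0 x hx) y
        rw [h0]; simp
      rw [this]
      simp only [integral_zero]
      exact Set.indicator_nonneg (fun _ _ => by norm_num) x

noncomputable def dgbS (k₀ : ℝ) (k : ℝ × ℝ) : ℝ := Real.sqrt (k₀^2 - k.1^2 - k.2^2)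

noncomputable def dgbM (k₀ : ℝ) (i : Fin 3) (k : ℝ × ℝ) : ℂ :=
  ![-Complex.I * k.1, -Complex.I * k.2, Complex.I * dgbS k₀ k] i

noncomputable def dgbE (k₀ r₀ : ℝ) (x : Fin 3 → ℝ) (k : ℝ × ℝ) : ℂ :=
  Complex.exp (-Complex.I * ((k.1 * x 0 + k.2 * x 1 : ℝ) : ℂ)) *
  Complex.exp (-Complex.I * ((dgbS k₀ k * (r₀ - x 2) : ℝ) : ℂ))

noncomputable def dgbL (k₀ : ℝ) (k : ℝ × ℝ) : (Fin 3 → ℝ) →L[ℝ] ℂ :=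
  ∑ j : Fin 3, dgbM k₀ j k •
    ((ContinuousLinearMap.proj j : ((Fin 3) → ℝ) →L[ℝ] ℝ).smulRight (1 : ℂ))

lemma dgbS_cont (k₀ : ℝ) : Continuous (dgbS k₀) := by
  unfold dgbS; fun_prop

lemma dgbM_cont (k₀ : ℝ) (i : Fin 3) : Continuous (dgbM k₀ i) := by
  have hs := dgbS_cont k₀
  have h0 : Continuous fun k : ℝ × ℝ => -Complex.I * (k.1 : ℂ) := by fun_prop
  have h1 : Continuous fun k : ℝ × ℝ => -Complex.I * (k.2 : ℂ) := by fun_prop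
  have h2 : Continuous fun k : ℝ × ℝ => Complex.I * (dgbS k₀ k : ℂ) := by fun_prop
  fin_cases i
  · exact h0
  · exact h1
  · exact h2

lemma dgbE_cont (k₀ r₀ : ℝ) (x : Fin 3 → ℝ) : Continuous (dgbE k₀ r₀ x) := by
  have := dgbS_cont k₀
  unfold dgbE; fun_prop

lemma dgbL_cont (k₀ : ℝ) : Continuous (dgbL k₀) :=
  continuous_finset_sum _ fun j _ => (dgbM_cont k₀ j).smul continuous_const

lemma dgbL_apply (k₀ : ℝ) (k : ℝ × ℝ) (v : Fin 3 → ℝ) :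
    dgbL k₀ k v = ∑ j : Fin 3, dgbM k₀ j k * (v j : ℂ) := by
  simp [dgbL, ContinuousLinearMap.sum_apply, Complex.real_smul]

lemma dgbL_single (k₀ : ℝ) (k : ℝ × ℝ) (i : Fin 3) :
    dgbL k₀ k (Pi.single i 1) = dgbM k₀ i k := by
  rw [dgbL_apply]
  have h : ∀ j : Fin 3, dgbM k₀ j k * (((Pi.single i 1 : Fin 3 → ℝ) j : ℝ) : ℂ)
      = if j = i then dgbM k₀ i k else 0 := by
    intro j; by_cases h : j = i <;> simp [Pi.single_apply, h]
  simp [h]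

lemma norm_dgbE (k₀ r₀ : ℝ) (x : Fin 3 → ℝ) (k : ℝ × ℝ) : ‖dgbE k₀ r₀ x k‖ = 1 := by
  simp [dgbE, Complex.norm_exp]

lemma norm_dgbM_le (k₀ : ℝ) (hk₀ : 0 ≤ k₀) (i : Fin 3) (k : ℝ × ℝ)
    (hk : k.1^2 + k.2^2 < k₀^2) : ‖dgbM k₀ i k‖ ≤ k₀ := by
  have h1 : |k.1| ≤ k₀ := by
    rw [← Real.sqrt_sq hk₀, ← Real.sqrt_sq_eq_abs]
    exact Real.sqrt_le_sqrt (by nlinarith [sq_nonneg k.2])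
  have h2 : |k.2| ≤ k₀ := by
    rw [← Real.sqrt_sq hk₀, ← Real.sqrt_sq_eq_abs]
    exact Real.sqrt_le_sqrt (by nlinarith [sq_nonneg k.1])
  have h3 : |dgbS k₀ k| ≤ k₀ := by
    show |Real.sqrt (k₀^2 - k.1^2 - k.2^2)| ≤ k₀
    have hle : Real.sqrt (k₀^2 - k.1^2 - k.2^2) ≤ Real.sqrt (k₀^2) :=
      Real.sqrt_le_sqrt (by nlinarith [sq_nonneg k.1, sq_nonneg k.2])
    rw [Real.sqrt_sq hk₀] at hle
    rw [abs_of_nonneg (Real.sqrt_nonneg _)]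
    exact hle
  have e0 : ‖-Complex.I * (k.1 : ℂ)‖ = |k.1| := by simp
  have e1 : ‖-Complex.I * (k.2 : ℂ)‖ = |k.2| := by simp
  have e2 : ‖Complex.I * ((dgbS k₀ k : ℝ) : ℂ)‖ = |dgbS k₀ k| := by simp
  fin_cases i
  · show ‖-Complex.I * (k.1 : ℂ)‖ ≤ k₀
    rw [e0]; exact h1
  · show ‖-Complex.I * (k.2 : ℂ)‖ ≤ k₀
    rw [e1]; exact h2
  · show ‖Complex.I * ((dgbS k₀ k : ℝ) : ℂ)‖ ≤ k₀
    rw [e2]; exact h3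

lemma norm_dgbL_le (k₀ : ℝ) (hk₀ : 0 ≤ k₀) (k : ℝ × ℝ)
    (hk : k.1^2 + k.2^2 < k₀^2) : ‖dgbL k₀ k‖ ≤ 3 * k₀ := by
  refine ContinuousLinearMap.opNorm_le_bound _ (by positivity) fun v => ?_
  rw [dgbL_apply]
  calc ‖∑ j : Fin 3, dgbM k₀ j k * (v j : ℂ)‖
      ≤ ∑ j : Fin 3, ‖dgbM k₀ j k * (v j : ℂ)‖ := norm_sum_le _ _
    _ ≤ ∑ _j : Fin 3, k₀ * ‖v‖ := by
        refine Finset.sum_le_sum fun j _ => ?_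
        rw [norm_mul]
        have h1 : ‖dgbM k₀ j k‖ ≤ k₀ := norm_dgbM_le k₀ hk₀ j k hk
        have h2 : ‖((v j : ℝ) : ℂ)‖ ≤ ‖v‖ := by
          rw [Complex.norm_real]
          exact norm_le_pi_norm v j
        exact mul_le_mul h1 h2 (norm_nonneg _) hk₀
    _ = 3 * k₀ * ‖v‖ := by simp [Finset.sum_const]; ring

lemma dgb_exp_eq (k₀ r₀ : ℝ) (k : ℝ × ℝ) (x : Fin 3 → ℝ) :
    dgbE k₀ r₀ x k =
      Complex.exp (-Complex.I * ((dgbS k₀ k * r₀ : ℝ) : ℂ)) * Complex.exp (dgbL k₀ k x) := by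
  rw [dgbE, ← Complex.exp_add, ← Complex.exp_add]
  congr 1
  rw [dgbL_apply]
  simp only [dgbM, Fin.sum_univ_three, Matrix.cons_val_zero, Matrix.cons_val_one,
    Matrix.head_cons, Matrix.cons_val_two, Matrix.tail_cons]
  push_cast
  ring

lemma dgb_hasFDerivAt (k₀ r₀ : ℝ) (k : ℝ × ℝ) (b : ℂ) (x : Fin 3 → ℝ) :
    HasFDerivAt (fun y => b * dgbE k₀ r₀ y k) ((b * dgbE k₀ r₀ x k) • dgbL k₀ k) x := by
  have hfun : (fun y => b * dgbE k₀ r₀ y k) =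
      fun y => (b * Complex.exp (-Complex.I * ((dgbS k₀ k * r₀ : ℝ) : ℂ))) *
        Complex.exp (dgbL k₀ k y) := by
    funext y; rw [dgb_exp_eq]; ring
  rw [hfun]
  have h1 : HasFDerivAt (fun y => Complex.exp (dgbL k₀ k y))
      (Complex.exp (dgbL k₀ k x) • dgbL k₀ k) x := (dgbL k₀ k).hasFDerivAt.cexp
  have h2 := h1.const_mul (b * Complex.exp (-Complex.I * ((dgbS k₀ k * r₀ : ℝ) : ℂ)))
  refine h2.congr_fderiv ?_
  rw [smul_smul]
  congr 1
  rw [dgb_exp_eq]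
  ring

section Core
variable (k₀ r₀ : ℝ)

variable (k₀ r₀ : ℝ)

lemma dgb_intE (b : ℝ × ℝ → ℂ) (hb : Integrable b) (x : Fin 3 → ℝ) :
    Integrable (fun k => b k * dgbE k₀ r₀ x k) := by
  refine Integrable.mono' hb.norm
    (hb.aestronglyMeasurable.mul (dgbE_cont k₀ r₀ x).aestronglyMeasurable)
    (Filter.Eventually.of_forall fun k => ?_)
  rw [norm_mul, norm_dgbE, mul_one]

lemma dgb_amp (hk₀ : 0 < k₀) (b : ℝ × ℝ → ℂ) (hb : Integrable b)
    (hsupp : ∀ k, b k ≠ 0 → k.1^2 + k.2^2 < k₀^2) (i : Fin 3) :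
    Integrable (fun k => dgbM k₀ i k * b k) := by
  refine Integrable.mono' (hb.norm.const_mul k₀)
    ((dgbM_cont k₀ i).aestronglyMeasurable.mul hb.aestronglyMeasurable)
    (Filter.Eventually.of_forall fun k => ?_)
  rcases eq_or_ne (b k) 0 with h | h
  · simp [h]
  · rw [norm_mul]
    exact mul_le_mul_of_nonneg_right (norm_dgbM_le k₀ hk₀.le i k (hsupp k h)) (norm_nonneg _)

lemma dgb_pd (hk₀ : 0 < k₀) (b : ℝ × ℝ → ℂ) (hb : Integrable b)
    (hsupp : ∀ k, b k ≠ 0 → k.1^2 + k.2^2 < k₀^2) (i : Fin 3) (x : Fin 3 → ℝ) :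
    pd (fun y => ∫ k, b k * dgbE k₀ r₀ y k) i x
      = ∫ k, dgbM k₀ i k * b k * dgbE k₀ r₀ x k := by
  have hbound : ∀ (k : ℝ × ℝ) (y : Fin 3 → ℝ),
      ‖(b k * dgbE k₀ r₀ y k) • dgbL k₀ k‖ ≤ 3 * k₀ * ‖b k‖ := by
    intro k y
    rcases eq_or_ne (b k) 0 with h | h
    · rw [h, zero_mul, norm_smul (0:ℂ) (dgbL k₀ k)]; simp
    · rw [norm_smul (b k * dgbE k₀ r₀ y k) (dgbL k₀ k), norm_mul, norm_dgbE, mul_one]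
      calc ‖b k‖ * ‖dgbL k₀ k‖ ≤ ‖b k‖ * (3 * k₀) :=
            mul_le_mul_of_nonneg_left (norm_dgbL_le k₀ hk₀.le k (hsupp k h)) (norm_nonneg _)
        _ = 3 * k₀ * ‖b k‖ := by ring
  have hmeasE : ∀ y : Fin 3 → ℝ,
      AEStronglyMeasurable (fun k => b k * dgbE k₀ r₀ y k) volume :=
    fun y => hb.aestronglyMeasurable.mul (dgbE_cont k₀ r₀ y).aestronglyMeasurable
  have hFmeas' : AEStronglyMeasurable (fun k => (b k * dgbE k₀ r₀ x k) • dgbL k₀ k) volume :=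
    (hmeasE x).smul (dgbL_cont k₀).aestronglyMeasurable
  have hderiv := hasFDerivAt_integral_of_dominated_of_fderiv_le
    (F := fun (y : Fin 3 → ℝ) k => b k * dgbE k₀ r₀ y k)
    (F' := fun (y : Fin 3 → ℝ) k => (b k * dgbE k₀ r₀ y k) • dgbL k₀ k)
    (x₀ := x) (bound := fun k => 3 * k₀ * ‖b k‖)
    (Metric.ball_mem_nhds x zero_lt_one) (Filter.Eventually.of_forall fun y => hmeasE y) (dgb_intE k₀ r₀ b hb x)
    hFmeas' (Filter.Eventually.of_forall fun k y _ => hbound k y)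
    (hb.norm.const_mul _)
    (Filter.Eventually.of_forall fun k y _ => dgb_hasFDerivAt k₀ r₀ k (b k) y)
  have hintF' : Integrable (fun k => (b k * dgbE k₀ r₀ x k) • dgbL k₀ k) :=
    Integrable.mono' (hb.norm.const_mul (3 * k₀)) hFmeas'
      (Filter.Eventually.of_forall fun k => hbound k x)
  rw [pd, hderiv.fderiv, ContinuousLinearMap.integral_apply hintF']
  refine integral_congr_ae (Filter.Eventually.of_forall fun k => ?_)
  simp only [ContinuousLinearMap.smul_apply, dgbL_single, smul_eq_mul]
  ring


end Core

set_option maxHeartbeats 2000000 in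
/-- The downward-propagating Gaussian-beam field `E⁽⁰⁾`, given as a superposition of
plane waves with amplitude `g` supported in the disk of radius `k₀`, solves the
homogeneous Helmholtz system and is divergence-free. -/
theorem downward_gaussian_beam_solves_helmholtz
    (k₀ : ℝ) (hk₀ : 0 < k₀) (p₁ p₂ : ℝ) (r₀ : ℝ)
    (F : ℝ × ℝ → ℂ) (hFc : Continuous F) (hFsupp : HasCompactSupport F)
    (hFdisk : ∀ k : ℝ × ℝ, F k ≠ 0 → k.1 ^ 2 + k.2 ^ 2 < k₀ ^ 2)
    (g : ℝ × ℝ → Fin 3 → ℂ)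
    (hg : ∀ k : ℝ × ℝ, g k = fun j =>
      (1 / 2 : ℂ) * F k *
        ![(p₁ : ℂ), (p₂ : ℂ),
          (((p₁ * k.1 + p₂ * k.2) / Real.sqrt (k₀ ^ 2 - k.1 ^ 2 - k.2 ^ 2) : ℝ) : ℂ)] j)
    (E₀ : (Fin 3 → ℝ) → Fin 3 → ℂ)
    (hE₀ : ∀ (x : Fin 3 → ℝ) (j : Fin 3), E₀ x j =
      ((1 / (4 * Real.pi ^ 2) : ℝ) : ℂ) *
      ∫ k : ℝ × ℝ, g k j *
        Complex.exp (-Complex.I * ((k.1 * x 0 + k.2 * x 1 : ℝ) : ℂ)) *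
        Complex.exp (-Complex.I *
            ((Real.sqrt (k₀ ^ 2 - k.1 ^ 2 - k.2 ^ 2) * (r₀ - x 2) : ℝ) : ℂ))) :
    (∀ (x : Fin 3 → ℝ) (j : Fin 3),
        (∑ i : Fin 3, pd (fun y => pd (fun z => E₀ z j) i y) i x)
          + ((k₀ ^ 2 : ℝ) : ℂ) * E₀ x j = 0) ∧
    (∀ x : Fin 3 → ℝ, ∑ j : Fin 3, pd (fun y => E₀ y j) j x = 0) := by
    classical
  set c : ℂ := ((1 / (4 * Real.pi ^ 2) : ℝ) : ℂ) with hc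
  set b : Fin 3 → (ℝ × ℝ) → ℂ := fun j k => c * g k j with hbdef
  have hg0 : ∀ (k : ℝ × ℝ) (j : Fin 3), F k = 0 → g k j = 0 := by
    intro k j hF; rw [hg k]; simp [hF]
  have hsupp : ∀ (j : Fin 3) (k : ℝ × ℝ), b j k ≠ 0 → k.1^2 + k.2^2 < k₀^2 := by
    intro j k hbk
    refine hFdisk k fun hF => hbk ?_
    simp [hbdef, hg0 k j hF]
  -- measurability of the amplitudes
  have hmeasg : ∀ j : Fin 3, AEStronglyMeasurable (fun k => g k j) volume := by
    intro j
    have hv2 : AEStronglyMeasurable (fun k : ℝ × ℝ =>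
        (((p₁ * k.1 + p₂ * k.2) / Real.sqrt (k₀ ^ 2 - k.1 ^ 2 - k.2 ^ 2) : ℝ) : ℂ)) volume := by
      refine (Complex.measurable_ofReal.comp ?_).aestronglyMeasurable
      exact ((by fun_prop : Measurable fun k : ℝ × ℝ => p₁ * k.1 + p₂ * k.2).div
        (Real.continuous_sqrt.comp
          (by fun_prop : Continuous fun k : ℝ × ℝ => k₀^2 - k.1^2 - k.2^2)).measurable)
    have he : (fun k => g k j) = fun k : ℝ × ℝ => (1 / 2 : ℂ) * F k *
        ![(p₁ : ℂ), (p₂ : ℂ),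
          (((p₁ * k.1 + p₂ * k.2) / Real.sqrt (k₀ ^ 2 - k.1 ^ 2 - k.2 ^ 2) : ℝ) : ℂ)] j := by
      funext k; rw [hg k]
    rw [he]
    have hbase : AEStronglyMeasurable (fun k : ℝ × ℝ => (1 / 2 : ℂ) * F k) volume :=
      aestronglyMeasurable_const.mul hFc.aestronglyMeasurable
    fin_cases j
    · simpa [Pi.mul_def] using hbase.mul aestronglyMeasurable_const
    · simpa [Pi.mul_def] using hbase.mul aestronglyMeasurable_const
    · simpa [Pi.mul_def] using hbase.mul hv2
  have hmeasb : ∀ j : Fin 3, AEStronglyMeasurable (b j) volume := fun j =>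
    aestronglyMeasurable_const.mul (hmeasg j)
  -- integrability of the amplitudes
  obtain ⟨M, hM⟩ := hFsupp.exists_bound_of_continuous hFc
  have hM0 : (0:ℝ) ≤ M := le_trans (norm_nonneg _) (hM (0, 0))
  have hFint : Integrable F := hFc.integrable_of_hasCompactSupport hFsupp
  have hBint := integrable_B k₀ hk₀
  set B : ℝ × ℝ → ℝ := Set.indicator {k : ℝ × ℝ | k.1^2 + k.2^2 < k₀^2}
    (fun k => 1 / Real.sqrt (k₀^2 - k.1^2 - k.2^2)) with hBdef
  have hBnn : ∀ k, 0 ≤ B k :=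
    fun k => Set.indicator_nonneg (fun k _ => one_div_nonneg.2 (Real.sqrt_nonneg _)) k
  set q : ℝ := ‖c‖ * (|p₁| + |p₂| + M * (|p₁| + |p₂|) * k₀ + 1) with hq
  have hqnn : 0 ≤ q := by positivity
  have hq1 : ‖c‖ * (1/2) * |p₁| ≤ q := by
    have h := mul_le_mul_of_nonneg_left
      (by positivity : (0:ℝ) ≤ |p₂| + M * (|p₁| + |p₂|) * k₀ + 1 + |p₁| / 2) (norm_nonneg c)
    rw [hq]; nlinarith [h]
  have hq2 : ‖c‖ * (1/2) * |p₂| ≤ q := by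
    have h := mul_le_mul_of_nonneg_left
      (by positivity : (0:ℝ) ≤ |p₁| + M * (|p₁| + |p₂|) * k₀ + 1 + |p₂| / 2) (norm_nonneg c)
    rw [hq]; nlinarith [h]
  have hq3 : ‖c‖ * (1/2) * (M * (|p₁| + |p₂|) * k₀) ≤ q := by
    have h := mul_le_mul_of_nonneg_left
      (by positivity : (0:ℝ) ≤ |p₁| + |p₂| + 1 + M * (|p₁| + |p₂|) * k₀ / 2) (norm_nonneg c)
    rw [hq]; nlinarith [h]
  have hk1k2 : ∀ k : ℝ × ℝ, k.1^2 + k.2^2 < k₀^2 → |k.1| ≤ k₀ ∧ |k.2| ≤ k₀ := by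
    intro k hk
    constructor
    · rw [← Real.sqrt_sq hk₀.le, ← Real.sqrt_sq_eq_abs]
      exact Real.sqrt_le_sqrt (by nlinarith [sq_nonneg k.2])
    · rw [← Real.sqrt_sq hk₀.le, ← Real.sqrt_sq_eq_abs]
      exact Real.sqrt_le_sqrt (by nlinarith [sq_nonneg k.1])
  have hgbint : Integrable (fun k : ℝ × ℝ => q * (‖F k‖ + B k)) volume := by
    exact (hFint.norm.add hBint).const_mul q
  have hintb : ∀ j : Fin 3, Integrable (b j) volume := by
    intro j
    refine Integrable.mono' hgbint (hmeasb j)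
      (Filter.Eventually.of_forall fun k => ?_)
    rcases eq_or_ne (F k) 0 with hF | hF
    · have hz : b j k = 0 := by simp [hbdef, hg0 k j hF]
      rw [hz, norm_zero]
      have h1 := hBnn k
      have h2 := norm_nonneg (F k)
      positivity
    · have hd := hFdisk k hF
      have hs : 0 < Real.sqrt (k₀^2 - k.1^2 - k.2^2) := Real.sqrt_pos.2 (by linarith)
      have hBk : B k = 1 / Real.sqrt (k₀^2 - k.1^2 - k.2^2) :=
        Set.indicator_of_mem (show k ∈ {k : ℝ × ℝ | k.1^2 + k.2^2 < k₀^2} from hd) _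
      obtain ⟨hk1, hk2⟩ := hk1k2 k hd
      have hhalf : ‖(1 / 2 : ℂ)‖ = 1/2 := by norm_num
      fin_cases j
      · show ‖b 0 k‖ ≤ q * (‖F k‖ + B k)
        have hb0 : b 0 k = c * ((1 / 2 : ℂ) * F k * (p₁ : ℂ)) := by
          simp [hbdef, hg k]
        rw [hb0, norm_mul, norm_mul, norm_mul, hhalf,
          show ‖((p₁ : ℝ) : ℂ)‖ = |p₁| from by simp]
        nlinarith [hq1, norm_nonneg (F k), hBnn k, hqnn, norm_nonneg c, abs_nonneg p₁]
      · show ‖b 1 k‖ ≤ q * (‖F k‖ + B k)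
        have hb1 : b 1 k = c * ((1 / 2 : ℂ) * F k * (p₂ : ℂ)) := by
          simp [hbdef, hg k]
        rw [hb1, norm_mul, norm_mul, norm_mul, hhalf,
          show ‖((p₂ : ℝ) : ℂ)‖ = |p₂| from by simp]
        nlinarith [hq2, norm_nonneg (F k), hBnn k, hqnn, norm_nonneg c, abs_nonneg p₂]
      · show ‖b 2 k‖ ≤ q * (‖F k‖ + B k)
        have hb2 : b 2 k = c * ((1 / 2 : ℂ) * F k *
            (((p₁ * k.1 + p₂ * k.2) / Real.sqrt (k₀ ^ 2 - k.1 ^ 2 - k.2 ^ 2) : ℝ) : ℂ)) := by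
          simp [hbdef, hg k]
        rw [hb2, norm_mul, norm_mul, norm_mul, hhalf,
          show ‖(((p₁ * k.1 + p₂ * k.2) / Real.sqrt (k₀ ^ 2 - k.1 ^ 2 - k.2 ^ 2) : ℝ) : ℂ)‖
            = |(p₁ * k.1 + p₂ * k.2) / Real.sqrt (k₀ ^ 2 - k.1 ^ 2 - k.2 ^ 2)| from by
              rw [Complex.norm_real, Real.norm_eq_abs]]
        have hnum : |p₁ * k.1 + p₂ * k.2| ≤ (|p₁| + |p₂|) * k₀ := by
          calc |p₁ * k.1 + p₂ * k.2| ≤ |p₁ * k.1| + |p₂ * k.2| := abs_add_le _ _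
            _ = |p₁| * |k.1| + |p₂| * |k.2| := by rw [abs_mul, abs_mul]
            _ ≤ |p₁| * k₀ + |p₂| * k₀ := by
                have h1 := abs_nonneg p₁
                have h2 := abs_nonneg p₂
                gcongr
            _ = (|p₁| + |p₂|) * k₀ := by ring
        have habs : |(p₁ * k.1 + p₂ * k.2) / Real.sqrt (k₀ ^ 2 - k.1 ^ 2 - k.2 ^ 2)|
            ≤ ((|p₁| + |p₂|) * k₀) * B k := by
          rw [abs_div, abs_of_nonneg (Real.sqrt_nonneg _), hBk, mul_one_div]
          exact (div_le_div_iff_of_pos_right hs).mpr hnum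
        have hFM := hM k
        calc ‖c‖ * (1/2 * ‖F k‖ * |(p₁ * k.1 + p₂ * k.2) / Real.sqrt (k₀ ^ 2 - k.1 ^ 2 - k.2 ^ 2)|)
            ≤ ‖c‖ * (1/2 * (M * (((|p₁| + |p₂|) * k₀) * B k))) := by
              have hmm : ‖F k‖ * |(p₁ * k.1 + p₂ * k.2) / Real.sqrt (k₀ ^ 2 - k.1 ^ 2 - k.2 ^ 2)|
                  ≤ M * (((|p₁| + |p₂|) * k₀) * B k) :=
                mul_le_mul hFM habs (abs_nonneg _) hM0
              nlinarith [norm_nonneg c, hmm]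
          _ = (‖c‖ * (1/2) * (M * (|p₁| + |p₂|) * k₀)) * B k := by ring
          _ ≤ q * B k := mul_le_mul_of_nonneg_right hq3 (hBnn k)
          _ ≤ q * (‖F k‖ + B k) := by nlinarith [hqnn, norm_nonneg (F k)]
  -- rewriting E₀ in the standard form
  have hEeq : ∀ j : Fin 3, (fun y : Fin 3 → ℝ => E₀ y j)
      = fun y => ∫ k : ℝ × ℝ, b j k * dgbE k₀ r₀ y k := by
    intro j; funext y
    rw [hE₀ y j, ← integral_const_mul]
    refine integral_congr_ae (Filter.Eventually.of_forall fun k => ?_)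
    show c * (g k j * _ * _) = (c * g k j) * dgbE k₀ r₀ y k
    simp only [dgbE, dgbS]
    ring
  constructor
  · -- Helmholtz equation
    intro x j
    have hbj := hintb j
    have hsj := hsupp j
    have hamp1 : ∀ i : Fin 3, Integrable (fun k => dgbM k₀ i k * b j k) volume :=
      fun i => dgb_amp k₀ hk₀ _ hbj hsj i
    have hs1 : ∀ (i : Fin 3) (k : ℝ × ℝ), dgbM k₀ i k * b j k ≠ 0 → k.1^2 + k.2^2 < k₀^2 :=
      fun i k h => hsj k fun h0 => h (by rw [h0, mul_zero])
    have key : ∀ i : Fin 3, pd (fun y => pd (fun z => E₀ z j) i y) i x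
        = ∫ k : ℝ × ℝ, dgbM k₀ i k * (dgbM k₀ i k * b j k) * dgbE k₀ r₀ x k := by
      intro i
      have hfe : (fun y => pd (fun z => E₀ z j) i y)
          = fun y => ∫ k : ℝ × ℝ, (dgbM k₀ i k * b j k) * dgbE k₀ r₀ y k := by
        funext y
        rw [hEeq j]
        exact dgb_pd k₀ r₀ hk₀ (b j) hbj hsj i y
      rw [hfe]
      exact dgb_pd k₀ r₀ hk₀ _ (hamp1 i) (hs1 i) i x
    have hEx : E₀ x j = ∫ k : ℝ × ℝ, b j k * dgbE k₀ r₀ x k := congrFun (hEeq j) x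
    have hint1 : ∀ i : Fin 3, Integrable
        (fun k : ℝ × ℝ => dgbM k₀ i k * (dgbM k₀ i k * b j k) * dgbE k₀ r₀ x k) volume :=
      fun i => dgb_intE k₀ r₀ _ (dgb_amp k₀ hk₀ _ (hamp1 i) (hs1 i) i) x
    have hint2 : Integrable
        (fun k : ℝ × ℝ => ((k₀^2 : ℝ) : ℂ) * (b j k * dgbE k₀ r₀ x k)) volume :=
      (dgb_intE k₀ r₀ _ hbj x).const_mul _
    have hzero : ∀ k : ℝ × ℝ,
        (∑ i : Fin 3, dgbM k₀ i k * (dgbM k₀ i k * b j k) * dgbE k₀ r₀ x k)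
          + ((k₀^2 : ℝ) : ℂ) * (b j k * dgbE k₀ r₀ x k) = 0 := by
      intro k
      rcases eq_or_ne (b j k) 0 with h0 | h0
      · simp [h0]
      · have hd := hsj k h0
        have hs2 : (dgbS k₀ k)^2 = k₀^2 - k.1^2 - k.2^2 := Real.sq_sqrt (by linarith)
        have hc2 : ((dgbS k₀ k : ℝ) : ℂ)^2 = ((k₀:ℂ))^2 - ((k.1:ℝ):ℂ)^2 - ((k.2:ℝ):ℂ)^2 := by
          have h := congrArg (fun t : ℝ => (t : ℂ)) hs2
          push_cast at h
          exact h
        simp only [dgbM, Fin.sum_univ_three, Matrix.cons_val_zero, Matrix.cons_val_one,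
          Matrix.head_cons, Matrix.cons_val_two, Matrix.tail_cons]
        push_cast
        linear_combination ((((k.1:ℝ):ℂ)^2 + ((k.2:ℝ):ℂ)^2 + ((dgbS k₀ k : ℝ):ℂ)^2)
          * (b j k * dgbE k₀ r₀ x k)) * Complex.I_sq
          - (b j k * dgbE k₀ r₀ x k) * hc2
    calc (∑ i : Fin 3, pd (fun y => pd (fun z => E₀ z j) i y) i x)
          + ((k₀^2 : ℝ) : ℂ) * E₀ x j
        = ∫ k : ℝ × ℝ, ((∑ i : Fin 3, dgbM k₀ i k * (dgbM k₀ i k * b j k) * dgbE k₀ r₀ x k)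
            + ((k₀^2 : ℝ) : ℂ) * (b j k * dgbE k₀ r₀ x k)) := by
          rw [Finset.sum_congr rfl fun i _ => key i, hEx, ← integral_const_mul,
            ← integral_finset_sum _ fun i _ => hint1 i,
            ← integral_add (integrable_finset_sum _ fun i _ => hint1 i) hint2]
      _ = 0 := by
          rw [integral_congr_ae (Filter.Eventually.of_forall hzero), integral_zero]
  · -- divergence free
    intro x
    have key2 : ∀ j : Fin 3, pd (fun y => E₀ y j) j x
        = ∫ k : ℝ × ℝ, dgbM k₀ j k * b j k * dgbE k₀ r₀ x k := by
      intro j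
      rw [hEeq j]
      exact dgb_pd k₀ r₀ hk₀ _ (hintb j) (hsupp j) j x
    have hint3 : ∀ j : Fin 3, Integrable
        (fun k : ℝ × ℝ => dgbM k₀ j k * b j k * dgbE k₀ r₀ x k) volume :=
      fun j => dgb_intE k₀ r₀ _ (dgb_amp k₀ hk₀ _ (hintb j) (hsupp j) j) x
    have hzero2 : ∀ k : ℝ × ℝ,
        (∑ j : Fin 3, dgbM k₀ j k * b j k * dgbE k₀ r₀ x k) = 0 := by
      intro k
      rcases eq_or_ne (F k) 0 with hF | hF
      · have hbz : ∀ j : Fin 3, b j k = 0 := fun j => by simp [hbdef, hg0 k j hF]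
        simp [hbz]
      · have hd := hFdisk k hF
        have hspos : 0 < Real.sqrt (k₀^2 - k.1^2 - k.2^2) := Real.sqrt_pos.2 (by linarith)
        have hsne : ((Real.sqrt (k₀^2 - k.1^2 - k.2^2) : ℝ) : ℂ) ≠ 0 := by
          exact_mod_cast ne_of_gt hspos
        simp only [hbdef, hg k]
        simp only [dgbM, dgbS, Fin.sum_univ_three, Matrix.cons_val_zero, Matrix.cons_val_one,
          Matrix.head_cons, Matrix.cons_val_two, Matrix.tail_cons]
        rw [Complex.ofReal_div]
        push_cast
        field_simp
        ring
    rw [Finset.sum_congr rfl fun j _ => key2 j, ← integral_finset_sum _ fun j _ => hint3 j,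
      integral_congr_ae (Filter.Eventually.of_forall hzero2), integral_zero]
end

section
/- Let k₀ > 0 and let ν, s ∈ ℝ³ be unit vectors. Set c = s − 2⟨ν, s⟩ν and assume c₃ ≠ 0. Define on the open disk D = {(k₁,k₂) : k₁² + k₂² < k₀²} the phase function Ψ(k₁,k₂) = ⟨k/k₀, s⟩ − 2⟨k/k₀, ν⟩⟨ν, s⟩, where k = k(k₁,k₂) = (k₁, k₂, −√(k₀² − k₁² − k₂²)). Then Ψ is differentiable on D, and for (k₁,k₂) ∈ D the gradient ∇Ψ(k₁,k₂) vanishes if and only if (k₁,k₂) = −k₀·sign(c₃)·(c₁, c₂). In particular Ψ has exactly one critical point in D. -/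
/-- The real dot product on ℝ³ (represented as `Fin 3 → ℝ`). -/
noncomputable def dot3 (v w : Fin 3 → ℝ) : ℝ := ∑ i, v i * w i

/-- The phase function `Ψ(k₁,k₂) = ⟨k/k₀, s⟩ − 2⟨k/k₀, ν⟩⟨ν, s⟩` is differentiable on
the open disk `D` of radius `k₀`, and its gradient vanishes at a point of `D` exactly at
`(k₁*,k₂*) = −k₀ sign(c₃)(c₁,c₂)`; in particular `Ψ` has exactly one critical point
in `D`. -/
theorem phase_unique_critical_point
    (k₀ : ℝ) (hk₀ : 0 < k₀)
    (ν s : Fin 3 → ℝ) (hν : dot3 ν ν = 1) (hs : dot3 s s = 1)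
    (c : Fin 3 → ℝ) (hc : c = fun i => s i - 2 * dot3 ν s * ν i) (hc3 : c 2 ≠ 0)
    (D : Set (ℝ × ℝ)) (hD : D = {k : ℝ × ℝ | k.1 ^ 2 + k.2 ^ 2 < k₀ ^ 2})
    (kvec : ℝ × ℝ → Fin 3 → ℝ)
    (hkvec : ∀ k : ℝ × ℝ, kvec k = ![k.1, k.2, -Real.sqrt (k₀ ^ 2 - k.1 ^ 2 - k.2 ^ 2)])
    (Ψ : ℝ × ℝ → ℝ)
    (hΨ : ∀ k : ℝ × ℝ, Ψ k =
      dot3 (fun i => kvec k i / k₀) s - 2 * dot3 (fun i => kvec k i / k₀) ν * dot3 ν s) :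
    DifferentiableOn ℝ Ψ D ∧
    (∀ k ∈ D, (fderiv ℝ Ψ k = 0 ↔
      k = (-(k₀ * Real.sign (c 2)) * c 0, -(k₀ * Real.sign (c 2)) * c 1))) ∧
    (∃! k : ℝ × ℝ, k ∈ D ∧ fderiv ℝ Ψ k = 0) := by
  have hk₀' : k₀ ≠ 0 := ne_of_gt hk₀
  have hν' : ν 0 * ν 0 + ν 1 * ν 1 + ν 2 * ν 2 = 1 := by
    simpa [dot3, Fin.sum_univ_three] using hν
  have hs' : s 0 * s 0 + s 1 * s 1 + s 2 * s 2 = 1 := by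
    simpa [dot3, Fin.sum_univ_three] using hs
  have hd : dot3 ν s = ν 0 * s 0 + ν 1 * s 1 + ν 2 * s 2 := by
    simp [dot3, Fin.sum_univ_three]
  have hc0 : c 0 = s 0 - 2 * dot3 ν s * ν 0 := by rw [hc]
  have hc1 : c 1 = s 1 - 2 * dot3 ν s * ν 1 := by rw [hc]
  have hc2 : c 2 = s 2 - 2 * dot3 ν s * ν 2 := by rw [hc]
  have hcc : c 0 ^ 2 + c 1 ^ 2 + c 2 ^ 2 = 1 := by
    rw [hc0, hc1, hc2, hd]
    linear_combination hs' + 4 * (ν 0 * s 0 + ν 1 * s 1 + ν 2 * s 2) ^ 2 * hν'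
  have hΨ' : Ψ = fun k : ℝ × ℝ =>
      (k.1 * c 0 + k.2 * c 1 - Real.sqrt (k₀ ^ 2 - k.1 ^ 2 - k.2 ^ 2) * c 2) / k₀ := by
    funext k
    rw [hΨ k, hc0, hc1, hc2]
    simp only [hkvec k, dot3, Fin.sum_univ_three, Matrix.cons_val_zero, Matrix.cons_val_one,
      Matrix.head_cons, Matrix.cons_val_two, Matrix.tail_cons]
    field_simp
    ring
  subst hΨ' hD
  have hsne : Real.sign (c 2) ≠ 0 := by
    rcases hc3.lt_or_gt with h | h
    · rw [Real.sign_of_neg h]; norm_num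
    · rw [Real.sign_of_pos h]; norm_num
  have habs : Real.sign (c 2) * c 2 = |c 2| := by
    rcases hc3.lt_or_gt with h | h
    · rw [Real.sign_of_neg h, abs_of_neg h]; ring
    · rw [Real.sign_of_pos h, abs_of_pos h]; ring
  have hsq1 : Real.sign (c 2) ^ 2 = 1 := by
    rcases hc3.lt_or_gt with h | h
    · rw [Real.sign_of_neg h]; norm_num
    · rw [Real.sign_of_pos h]; norm_num
  -- the derivative of Ψ at interior points
  have hder : ∀ k : ℝ × ℝ, k.1 ^ 2 + k.2 ^ 2 < k₀ ^ 2 →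
      HasFDerivAt (fun k : ℝ × ℝ =>
          (k.1 * c 0 + k.2 * c 1 - Real.sqrt (k₀ ^ 2 - k.1 ^ 2 - k.2 ^ 2) * c 2) / k₀)
        (((c 0 + k.1 * c 2 / Real.sqrt (k₀ ^ 2 - k.1 ^ 2 - k.2 ^ 2)) / k₀) •
            ContinuousLinearMap.fst ℝ ℝ ℝ +
         ((c 1 + k.2 * c 2 / Real.sqrt (k₀ ^ 2 - k.1 ^ 2 - k.2 ^ 2)) / k₀) •
            ContinuousLinearMap.snd ℝ ℝ ℝ) k := by
    intro k hk
    have hpos : 0 < k₀ ^ 2 - k.1 ^ 2 - k.2 ^ 2 := by linarith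
    have hw : 0 < Real.sqrt (k₀ ^ 2 - k.1 ^ 2 - k.2 ^ 2) := Real.sqrt_pos.2 hpos
    have hg : HasFDerivAt (fun k : ℝ × ℝ => k₀ ^ 2 - k.1 ^ 2 - k.2 ^ 2)
        ((0 : ℝ × ℝ →L[ℝ] ℝ)
          - (k.1 • ContinuousLinearMap.fst ℝ ℝ ℝ + k.1 • ContinuousLinearMap.fst ℝ ℝ ℝ)
          - (k.2 • ContinuousLinearMap.snd ℝ ℝ ℝ + k.2 • ContinuousLinearMap.snd ℝ ℝ ℝ)) k := by
      have : (fun k : ℝ × ℝ => k₀ ^ 2 - k.1 ^ 2 - k.2 ^ 2)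
          = fun k : ℝ × ℝ => k₀ ^ 2 - k.1 * k.1 - k.2 * k.2 := by funext k; ring
      rw [this]
      exact ((hasFDerivAt_const _ _).sub (hasFDerivAt_fst.mul hasFDerivAt_fst)).sub
        (hasFDerivAt_snd.mul hasFDerivAt_snd)
    have hsq := (Real.hasDerivAt_sqrt (ne_of_gt hpos)).comp_hasFDerivAt k hg
    have hF := ((hasFDerivAt_fst.mul_const (c 0)).add (hasFDerivAt_snd.mul_const (c 1))).sub
        (hsq.mul_const (c 2))
    have hF2 := hF.const_mul k₀⁻¹
    have heq : (fun k : ℝ × ℝ =>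
          (k.1 * c 0 + k.2 * c 1 - Real.sqrt (k₀ ^ 2 - k.1 ^ 2 - k.2 ^ 2) * c 2) / k₀)
        = fun k : ℝ × ℝ =>
          k₀⁻¹ * (k.1 * c 0 + k.2 * c 1 - Real.sqrt (k₀ ^ 2 - k.1 ^ 2 - k.2 ^ 2) * c 2) := by
      funext k; ring
    rw [heq]
    convert hF2 using 1
    case e'_12 =>
      refine ContinuousLinearMap.ext fun v => ?_
      simp [ContinuousLinearMap.smul_apply, smul_eq_mul]
      field_simp
      ring
    all_goals rfl
  -- the key characterization of critical points
  have hiff : ∀ k : ℝ × ℝ, k.1 ^ 2 + k.2 ^ 2 < k₀ ^ 2 →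
      (fderiv ℝ (fun k : ℝ × ℝ =>
          (k.1 * c 0 + k.2 * c 1 - Real.sqrt (k₀ ^ 2 - k.1 ^ 2 - k.2 ^ 2) * c 2) / k₀) k = 0 ↔
        k = (-(k₀ * Real.sign (c 2)) * c 0, -(k₀ * Real.sign (c 2)) * c 1)) := by
    intro k hk
    have hpos : 0 < k₀ ^ 2 - k.1 ^ 2 - k.2 ^ 2 := by linarith
    rw [(hder k hk).fderiv]
    set w := Real.sqrt (k₀ ^ 2 - k.1 ^ 2 - k.2 ^ 2) with hwdef
    have hw : 0 < w := Real.sqrt_pos.2 hpos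
    have hwne : w ≠ 0 := ne_of_gt hw
    have hw2 : w ^ 2 = k₀ ^ 2 - k.1 ^ 2 - k.2 ^ 2 := by
      rw [hwdef]; exact Real.sq_sqrt hpos.le
    constructor
    · intro h0
      have e1 : (c 0 + k.1 * c 2 / w) / k₀ = 0 := by
        have := DFunLike.congr_fun h0 (1, 0)
        simpa using this
      have e2 : (c 1 + k.2 * c 2 / w) / k₀ = 0 := by
        have := DFunLike.congr_fun h0 (0, 1)
        simpa using this
      have f1 : c 0 * w + k.1 * c 2 = 0 := by
        rw [div_eq_zero_iff] at e1
        rcases e1 with h | h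
        · field_simp at h; linarith
        · exact absurd h hk₀'
      have f2 : c 1 * w + k.2 * c 2 = 0 := by
        rw [div_eq_zero_iff] at e2
        rcases e2 with h | h
        · field_simp at h; linarith
        · exact absurd h hk₀'
      have s1 : (c 0 * w) ^ 2 = (k.1 * c 2) ^ 2 := by
        linear_combination (c 0 * w - k.1 * c 2) * f1
      have s2 : (c 1 * w) ^ 2 = (k.2 * c 2) ^ 2 := by
        linear_combination (c 1 * w - k.2 * c 2) * f2
      have hwval : w ^ 2 = k₀ ^ 2 * c 2 ^ 2 := by
        linear_combination s1 + s2 + c 2 ^ 2 * hw2 - w ^ 2 * hcc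
      have hwabs : w = k₀ * |c 2| := by
        have h1 : k₀ ^ 2 * c 2 ^ 2 = (k₀ * |c 2|) ^ 2 := by
          rw [mul_pow, sq_abs]
        rw [← Real.sqrt_sq hw.le, hwval, h1, Real.sqrt_sq (by positivity)]
      have hwv : w = k₀ * (Real.sign (c 2) * c 2) := by rw [hwabs, habs]
      have g1 : k.1 = -(k₀ * Real.sign (c 2)) * c 0 := by
        rw [hwv] at f1
        have h2 : (k.1 + k₀ * Real.sign (c 2) * c 0) * c 2 = 0 := by linear_combination f1
        rcases mul_eq_zero.1 h2 with h | h
        · linarith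
        · exact absurd h hc3
      have g2 : k.2 = -(k₀ * Real.sign (c 2)) * c 1 := by
        rw [hwv] at f2
        have h2 : (k.2 + k₀ * Real.sign (c 2) * c 1) * c 2 = 0 := by linear_combination f2
        rcases mul_eq_zero.1 h2 with h | h
        · linarith
        · exact absurd h hc3
      rw [Prod.ext_iff]
      exact ⟨g1, g2⟩
    · intro hkeq
      have h1 : k.1 = -(k₀ * Real.sign (c 2)) * c 0 := by rw [hkeq]
      have h2 : k.2 = -(k₀ * Real.sign (c 2)) * c 1 := by rw [hkeq]
      have harg : k₀ ^ 2 - k.1 ^ 2 - k.2 ^ 2 = k₀ ^ 2 * c 2 ^ 2 := by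
        rw [h1, h2]
        linear_combination (-(k₀ ^ 2) * (c 0 ^ 2 + c 1 ^ 2)) * hsq1 - k₀ ^ 2 * hcc
      have hwv : w = k₀ * (Real.sign (c 2) * c 2) := by
        have h3 : k₀ ^ 2 * c 2 ^ 2 = (k₀ * |c 2|) ^ 2 := by rw [mul_pow, sq_abs]
        rw [hwdef, harg, h3, Real.sqrt_sq (by positivity), habs]
      have hA : (c 0 + k.1 * c 2 / w) / k₀ = 0 := by
        rw [h1, hwv]
        field_simp
        ring
      have hB : (c 1 + k.2 * c 2 / w) / k₀ = 0 := by
        rw [h2, hwv]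
        field_simp
        ring
      rw [hA, hB]
      simp
  refine ⟨?_, ?_, ?_⟩
  · intro k hk
    exact ((hder k hk).differentiableAt).differentiableWithinAt
  · intro k hk
    exact hiff k hk
  · have h2pos : 0 < c 2 ^ 2 := by positivity
    have hval : (-(k₀ * Real.sign (c 2)) * c 0) ^ 2 + (-(k₀ * Real.sign (c 2)) * c 1) ^ 2
        = k₀ ^ 2 * (1 - c 2 ^ 2) := by
      linear_combination (k₀ ^ 2 * (c 0 ^ 2 + c 1 ^ 2)) * hsq1 + k₀ ^ 2 * hcc
    have hpD : ((-(k₀ * Real.sign (c 2)) * c 0, -(k₀ * Real.sign (c 2)) * c 1) : ℝ × ℝ)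
        ∈ {k : ℝ × ℝ | k.1 ^ 2 + k.2 ^ 2 < k₀ ^ 2} := by
      show (-(k₀ * Real.sign (c 2)) * c 0) ^ 2 + (-(k₀ * Real.sign (c 2)) * c 1) ^ 2 < k₀ ^ 2
      rw [hval, show k₀ ^ 2 * (1 - c 2 ^ 2) = k₀ ^ 2 - k₀ ^ 2 * c 2 ^ 2 from by ring]
      have := mul_pos (pow_pos hk₀ 2) h2pos
      linarith
    refine ⟨(-(k₀ * Real.sign (c 2)) * c 0, -(k₀ * Real.sign (c 2)) * c 1),
      ⟨hpD, (hiff _ hpD).2 rfl⟩, ?_⟩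
    rintro q ⟨hqD, hq0⟩
    exact (hiff q hqD).1 hq0
end

section
/- Let k₀ > 0 and let ν, s ∈ ℝ³ be unit vectors. Set c = s − 2⟨ν, s⟩ν and assume c₃ ≠ 0. Define on the open disk D = {(k₁,k₂) : k₁² + k₂² < k₀²} the phase function Ψ(k₁,k₂) = ⟨k/k₀, s⟩ − 2⟨k/k₀, ν⟩⟨ν, s⟩, where k = k(k₁,k₂) = (k₁, k₂, −√(k₀² − k₁² − k₂²)). Then at the critical point (k₁*, k₂*) = −k₀·sign(c₃)·(c₁, c₂), the determinant of the Hessian matrix H(Ψ) of Ψ satisfies det(H(Ψ)(k₁*, k₂*)) = 1 / (c₃² k₀⁴); in particular it is strictly positive. -/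
/-- The two coordinate directions of ℝ². -/
noncomputable def e2 : Fin 2 → ℝ × ℝ := ![(1, 0), (0, 1)]


noncomputable def lm2 (a b : ℝ) : ℝ × ℝ →L[ℝ] ℝ :=
  a • ContinuousLinearMap.fst ℝ ℝ ℝ + b • ContinuousLinearMap.snd ℝ ℝ ℝ

@[simp] lemma lm2_apply (a b : ℝ) (v : ℝ × ℝ) : lm2 a b v = a * v.1 + b * v.2 := by
  simp [lm2]

lemma hasFDerivAt_G (k₀ : ℝ) (x : ℝ × ℝ) (h : 0 < k₀ ^ 2 - x.1 ^ 2 - x.2 ^ 2) :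
    HasFDerivAt (fun y : ℝ × ℝ => Real.sqrt (k₀ ^ 2 - y.1 ^ 2 - y.2 ^ 2))
      (lm2 (-x.1 / Real.sqrt (k₀ ^ 2 - x.1 ^ 2 - x.2 ^ 2))
           (-x.2 / Real.sqrt (k₀ ^ 2 - x.1 ^ 2 - x.2 ^ 2))) x := by
  have hg : Real.sqrt (k₀ ^ 2 - x.1 ^ 2 - x.2 ^ 2) ≠ 0 :=
    (Real.sqrt_pos.mpr h).ne'
  have hq : HasFDerivAt (fun y : ℝ × ℝ => k₀ ^ 2 - y.1 ^ 2 - y.2 ^ 2)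
      (lm2 (-(2 * x.1)) (-(2 * x.2))) x := by
    have h1 : HasFDerivAt (fun y : ℝ × ℝ => y.1 * y.1)
        (x.1 • ContinuousLinearMap.fst ℝ ℝ ℝ + x.1 • ContinuousLinearMap.fst ℝ ℝ ℝ) x :=
      hasFDerivAt_fst.mul hasFDerivAt_fst
    have h2 : HasFDerivAt (fun y : ℝ × ℝ => y.2 * y.2)
        (x.2 • ContinuousLinearMap.snd ℝ ℝ ℝ + x.2 • ContinuousLinearMap.snd ℝ ℝ ℝ) x :=
      hasFDerivAt_snd.mul hasFDerivAt_snd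
    have h3 := ((hasFDerivAt_const (k₀ ^ 2) x).sub h1).sub h2
    have hfun : (fun y : ℝ × ℝ => k₀ ^ 2 - y.1 ^ 2 - y.2 ^ 2)
        = fun y : ℝ × ℝ => k₀ ^ 2 - y.1 * y.1 - y.2 * y.2 := by funext y; ring
    rw [hfun]
    refine h3.congr_fderiv ?_
    refine ContinuousLinearMap.ext fun v => ?_
    simp [lm2]; ring
  have h4 := hq.sqrt h.ne'
  refine h4.congr_fderiv ?_
  refine ContinuousLinearMap.ext fun v => ?_
  simp only [lm2_apply, ContinuousLinearMap.coe_smul', Pi.smul_apply, lm2_apply, smul_eq_mul]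
  generalize hgg : Real.sqrt (k₀ ^ 2 - x.1 ^ 2 - x.2 ^ 2) = g at hg
  field_simp

lemma hasFDerivAt_psi (k₀ c0 c1 c2 : ℝ) (hk : k₀ ≠ 0) (x : ℝ × ℝ)
    (h : 0 < k₀ ^ 2 - x.1 ^ 2 - x.2 ^ 2) :
    HasFDerivAt
      (fun y : ℝ × ℝ => (y.1 * c0 + y.2 * c1 - c2 * Real.sqrt (k₀ ^ 2 - y.1 ^ 2 - y.2 ^ 2)) / k₀)
      (lm2 ((c0 + c2 * (x.1 / Real.sqrt (k₀ ^ 2 - x.1 ^ 2 - x.2 ^ 2))) / k₀)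
           ((c1 + c2 * (x.2 / Real.sqrt (k₀ ^ 2 - x.1 ^ 2 - x.2 ^ 2))) / k₀)) x := by
  have hg : Real.sqrt (k₀ ^ 2 - x.1 ^ 2 - x.2 ^ 2) ≠ 0 := (Real.sqrt_pos.mpr h).ne'
  have h1 := (((hasFDerivAt_fst.mul_const c0).add (hasFDerivAt_snd.mul_const c1)).sub
    ((hasFDerivAt_G k₀ x h).const_mul c2)).mul_const k₀⁻¹
  have hfun2 : (fun y : ℝ × ℝ => (y.1 * c0 + y.2 * c1 - c2 * Real.sqrt (k₀ ^ 2 - y.1 ^ 2 - y.2 ^ 2)) / k₀)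
      = fun y : ℝ × ℝ => (y.1 * c0 + y.2 * c1 - c2 * Real.sqrt (k₀ ^ 2 - y.1 ^ 2 - y.2 ^ 2)) * k₀⁻¹ := by
    funext y; rw [div_eq_mul_inv]
  rw [hfun2]
  refine h1.congr_fderiv ?_
  refine ContinuousLinearMap.ext fun v => ?_
  simp only [lm2_apply, ContinuousLinearMap.coe_smul', ContinuousLinearMap.coe_sub',
    ContinuousLinearMap.coe_add', Pi.smul_apply, Pi.sub_apply, Pi.add_apply, smul_eq_mul,
    ContinuousLinearMap.coe_fst', ContinuousLinearMap.coe_snd']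
  generalize Real.sqrt (k₀ ^ 2 - x.1 ^ 2 - x.2 ^ 2) = g at hg
  field_simp
  ring

lemma hasFDerivAt_F1 (k₀ p r : ℝ) (hk : k₀ ≠ 0) (x : ℝ × ℝ)
    (h : 0 < k₀ ^ 2 - x.1 ^ 2 - x.2 ^ 2) :
    HasFDerivAt
      (fun y : ℝ × ℝ => (p + r * (y.1 / Real.sqrt (k₀ ^ 2 - y.1 ^ 2 - y.2 ^ 2))) / k₀)
      (lm2 (r / k₀ * (1 / Real.sqrt (k₀ ^ 2 - x.1 ^ 2 - x.2 ^ 2)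
              + x.1 ^ 2 / Real.sqrt (k₀ ^ 2 - x.1 ^ 2 - x.2 ^ 2) ^ 3))
           (r / k₀ * (x.1 * x.2 / Real.sqrt (k₀ ^ 2 - x.1 ^ 2 - x.2 ^ 2) ^ 3))) x := by
  have hg : Real.sqrt (k₀ ^ 2 - x.1 ^ 2 - x.2 ^ 2) ≠ 0 := (Real.sqrt_pos.mpr h).ne'
  have hinv := (hasDerivAt_inv hg).comp_hasFDerivAt x (hasFDerivAt_G k₀ x h)
  have hmul := hasFDerivAt_fst.mul hinv
  have h1 := ((hmul.const_mul r).const_add p).mul_const k₀⁻¹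
  have hfun : (fun y : ℝ × ℝ => (p + r * (y.1 / Real.sqrt (k₀ ^ 2 - y.1 ^ 2 - y.2 ^ 2))) / k₀)
      = fun y : ℝ × ℝ => (p + r * (y.1 * (Real.sqrt (k₀ ^ 2 - y.1 ^ 2 - y.2 ^ 2))⁻¹)) * k₀⁻¹ := by
    funext y; rw [div_eq_mul_inv, div_eq_mul_inv]
  rw [hfun]
  refine h1.congr_fderiv ?_
  refine ContinuousLinearMap.ext fun v => ?_
  simp only [lm2_apply, ContinuousLinearMap.coe_smul', ContinuousLinearMap.coe_sub',
    ContinuousLinearMap.coe_add', Pi.smul_apply, Pi.sub_apply, Pi.add_apply, smul_eq_mul,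
    ContinuousLinearMap.coe_fst', ContinuousLinearMap.coe_snd', Function.comp]
  generalize Real.sqrt (k₀ ^ 2 - x.1 ^ 2 - x.2 ^ 2) = g at hg
  field_simp
  ring

lemma hasFDerivAt_F2 (k₀ p r : ℝ) (hk : k₀ ≠ 0) (x : ℝ × ℝ)
    (h : 0 < k₀ ^ 2 - x.1 ^ 2 - x.2 ^ 2) :
    HasFDerivAt
      (fun y : ℝ × ℝ => (p + r * (y.2 / Real.sqrt (k₀ ^ 2 - y.1 ^ 2 - y.2 ^ 2))) / k₀)
      (lm2 (r / k₀ * (x.1 * x.2 / Real.sqrt (k₀ ^ 2 - x.1 ^ 2 - x.2 ^ 2) ^ 3))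
           (r / k₀ * (1 / Real.sqrt (k₀ ^ 2 - x.1 ^ 2 - x.2 ^ 2)
              + x.2 ^ 2 / Real.sqrt (k₀ ^ 2 - x.1 ^ 2 - x.2 ^ 2) ^ 3))) x := by
  have hg : Real.sqrt (k₀ ^ 2 - x.1 ^ 2 - x.2 ^ 2) ≠ 0 := (Real.sqrt_pos.mpr h).ne'
  have hinv := (hasDerivAt_inv hg).comp_hasFDerivAt x (hasFDerivAt_G k₀ x h)
  have hmul := hasFDerivAt_snd.mul hinv
  have h1 := ((hmul.const_mul r).const_add p).mul_const k₀⁻¹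
  have hfun : (fun y : ℝ × ℝ => (p + r * (y.2 / Real.sqrt (k₀ ^ 2 - y.1 ^ 2 - y.2 ^ 2))) / k₀)
      = fun y : ℝ × ℝ => (p + r * (y.2 * (Real.sqrt (k₀ ^ 2 - y.1 ^ 2 - y.2 ^ 2))⁻¹)) * k₀⁻¹ := by
    funext y; rw [div_eq_mul_inv, div_eq_mul_inv]
  rw [hfun]
  refine h1.congr_fderiv ?_
  refine ContinuousLinearMap.ext fun v => ?_
  simp only [lm2_apply, ContinuousLinearMap.coe_smul', ContinuousLinearMap.coe_sub',
    ContinuousLinearMap.coe_add', Pi.smul_apply, Pi.sub_apply, Pi.add_apply, smul_eq_mul,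
    ContinuousLinearMap.coe_fst', ContinuousLinearMap.coe_snd', Function.comp]
  generalize Real.sqrt (k₀ ^ 2 - x.1 ^ 2 - x.2 ^ 2) = g at hg
  field_simp
  ring

/-- At the critical point `(k₁*,k₂*) = −k₀ sign(c₃)(c₁,c₂)` of the phase function
`Ψ(k₁,k₂) = ⟨k/k₀, s⟩ − 2⟨k/k₀, ν⟩⟨ν, s⟩`, the determinant of the Hessian matrix of `Ψ`
equals `1/(c₃² k₀⁴)`, which is strictly positive. -/
theorem phase_hessian_determinant
    (k₀ : ℝ) (hk₀ : 0 < k₀)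
    (ν s : Fin 3 → ℝ) (hν : dot3 ν ν = 1) (hs : dot3 s s = 1)
    (c : Fin 3 → ℝ) (hc : c = fun i => s i - 2 * dot3 ν s * ν i) (hc3 : c 2 ≠ 0)
    (kvec : ℝ × ℝ → Fin 3 → ℝ)
    (hkvec : ∀ k : ℝ × ℝ, kvec k = ![k.1, k.2, -Real.sqrt (k₀ ^ 2 - k.1 ^ 2 - k.2 ^ 2)])
    (Ψ : ℝ × ℝ → ℝ)
    (hΨ : ∀ k : ℝ × ℝ, Ψ k =
      dot3 (fun i => kvec k i / k₀) s - 2 * dot3 (fun i => kvec k i / k₀) ν * dot3 ν s)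
    (kstar : ℝ × ℝ)
    (hkstar : kstar = (-(k₀ * Real.sign (c 2)) * c 0, -(k₀ * Real.sign (c 2)) * c 1))
    (H : Matrix (Fin 2) (Fin 2) ℝ)
    (hH : H = Matrix.of fun i j : Fin 2 =>
      fderiv ℝ (fun x : ℝ × ℝ => fderiv ℝ Ψ x (e2 j)) kstar (e2 i)) :
    H.det = 1 / ((c 2) ^ 2 * k₀ ^ 4) ∧ 0 < H.det := by
  have hk0' : k₀ ≠ 0 := hk₀.ne'
  have hc0 : c 0 = s 0 - 2 * dot3 ν s * ν 0 := by rw [hc]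
  have hc1 : c 1 = s 1 - 2 * dot3 ν s * ν 1 := by rw [hc]
  have hc2 : c 2 = s 2 - 2 * dot3 ν s * ν 2 := by rw [hc]
  have hnorm : c 0 ^ 2 + c 1 ^ 2 + c 2 ^ 2 = 1 := by
    rw [hc0, hc1, hc2]
    simp only [dot3, Fin.sum_univ_three] at hν hs ⊢
    linear_combination hs + (2 * (ν 0 * s 0 + ν 1 * s 1 + ν 2 * s 2)) ^ 2 * hν
  set σ := Real.sign (c 2) with hσdef
  have hσcases : σ = 1 ∨ σ = -1 := by
    rcases hc3.lt_or_gt with h | h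
    · right; exact Real.sign_of_neg h
    · left; exact Real.sign_of_pos h
  have hσ2 : σ ^ 2 = 1 := by rcases hσcases with h | h <;> rw [h] <;> norm_num
  have hσ0 : σ ≠ 0 := by rcases hσcases with h | h <;> rw [h] <;> norm_num
  have hx1 : kstar.1 = -(k₀ * σ) * c 0 := by rw [hkstar]
  have hx2 : kstar.2 = -(k₀ * σ) * c 1 := by rw [hkstar]
  have hkey : k₀ ^ 2 - kstar.1 ^ 2 - kstar.2 ^ 2 = k₀ ^ 2 * c 2 ^ 2 := by
    rw [hx1, hx2]
    linear_combination (-(k₀ ^ 2 * (c 0 ^ 2 + c 1 ^ 2))) * hσ2 - k₀ ^ 2 * hnorm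
  have hDpos : 0 < k₀ ^ 2 - kstar.1 ^ 2 - kstar.2 ^ 2 := by
    rw [hkey]; positivity
  have hGval : Real.sqrt (k₀ ^ 2 - kstar.1 ^ 2 - kstar.2 ^ 2) = k₀ * (σ * c 2) := by
    rw [hkey, show k₀ ^ 2 * c 2 ^ 2 = (k₀ * (σ * c 2)) ^ 2 by
      linear_combination (-(k₀ ^ 2 * c 2 ^ 2)) * hσ2]
    refine Real.sqrt_sq ?_
    have habs : σ * c 2 = |c 2| := by
      rcases hc3.lt_or_gt with h | h
      · rw [hσdef, Real.sign_of_neg h, abs_of_neg h]; ring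
      · rw [hσdef, Real.sign_of_pos h, abs_of_pos h]; ring
    rw [habs]
    positivity
  have hΨ' : Ψ = fun y : ℝ × ℝ =>
      (y.1 * c 0 + y.2 * c 1 - c 2 * Real.sqrt (k₀ ^ 2 - y.1 ^ 2 - y.2 ^ 2)) / k₀ := by
    funext y
    rw [hΨ y, hkvec y, hc0, hc1, hc2]
    simp only [dot3, Fin.sum_univ_three, Matrix.cons_val_zero, Matrix.cons_val_one,
      Matrix.head_cons, Matrix.cons_val_two, Matrix.tail_cons]
    ring
  have hΨd : ∀ x : ℝ × ℝ, 0 < k₀ ^ 2 - x.1 ^ 2 - x.2 ^ 2 →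
      HasFDerivAt Ψ
        (lm2 ((c 0 + c 2 * (x.1 / Real.sqrt (k₀ ^ 2 - x.1 ^ 2 - x.2 ^ 2))) / k₀)
             ((c 1 + c 2 * (x.2 / Real.sqrt (k₀ ^ 2 - x.1 ^ 2 - x.2 ^ 2))) / k₀)) x := by
    intro x hx
    rw [hΨ']
    exact hasFDerivAt_psi k₀ (c 0) (c 1) (c 2) hk0' x hx
  have hU : IsOpen {x : ℝ × ℝ | 0 < k₀ ^ 2 - x.1 ^ 2 - x.2 ^ 2} := by
    have : Continuous fun x : ℝ × ℝ => k₀ ^ 2 - x.1 ^ 2 - x.2 ^ 2 := by fun_prop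
    exact isOpen_lt continuous_const this
  have hmem : kstar ∈ {x : ℝ × ℝ | 0 < k₀ ^ 2 - x.1 ^ 2 - x.2 ^ 2} := hDpos
  have hEv0 : (fun x : ℝ × ℝ => fderiv ℝ Ψ x (e2 0)) =ᶠ[nhds kstar]
      (fun x : ℝ × ℝ => (c 0 + c 2 * (x.1 / Real.sqrt (k₀ ^ 2 - x.1 ^ 2 - x.2 ^ 2))) / k₀) := by
    filter_upwards [hU.mem_nhds hmem] with x hx
    rw [(hΨd x hx).fderiv]
    simp [e2]
  have hEv1 : (fun x : ℝ × ℝ => fderiv ℝ Ψ x (e2 1)) =ᶠ[nhds kstar]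
      (fun x : ℝ × ℝ => (c 1 + c 2 * (x.2 / Real.sqrt (k₀ ^ 2 - x.1 ^ 2 - x.2 ^ 2))) / k₀) := by
    filter_upwards [hU.mem_nhds hmem] with x hx
    rw [(hΨd x hx).fderiv]
    simp [e2]
  have hF0 := hasFDerivAt_F1 k₀ (c 0) (c 2) hk0' kstar hDpos
  have hF1 := hasFDerivAt_F2 k₀ (c 1) (c 2) hk0' kstar hDpos
  set g : ℝ := Real.sqrt (k₀ ^ 2 - kstar.1 ^ 2 - kstar.2 ^ 2) with hgdef
  have h00 : H 0 0 = c 2 / k₀ * (1 / g + kstar.1 ^ 2 / g ^ 3) := by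
    rw [hH]
    show fderiv ℝ (fun x : ℝ × ℝ => fderiv ℝ Ψ x (e2 0)) kstar (e2 0) = _
    rw [hEv0.fderiv_eq, hF0.fderiv]
    simp [e2]
  have h10 : H 1 0 = c 2 / k₀ * (kstar.1 * kstar.2 / g ^ 3) := by
    rw [hH]
    show fderiv ℝ (fun x : ℝ × ℝ => fderiv ℝ Ψ x (e2 0)) kstar (e2 1) = _
    rw [hEv0.fderiv_eq, hF0.fderiv]
    simp [e2]
  have h01 : H 0 1 = c 2 / k₀ * (kstar.1 * kstar.2 / g ^ 3) := by
    rw [hH]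
    show fderiv ℝ (fun x : ℝ × ℝ => fderiv ℝ Ψ x (e2 1)) kstar (e2 0) = _
    rw [hEv1.fderiv_eq, hF1.fderiv]
    simp [e2]
  have h11 : H 1 1 = c 2 / k₀ * (1 / g + kstar.2 ^ 2 / g ^ 3) := by
    rw [hH]
    show fderiv ℝ (fun x : ℝ × ℝ => fderiv ℝ Ψ x (e2 1)) kstar (e2 1) = _
    rw [hEv1.fderiv_eq, hF1.fderiv]
    simp [e2]
  have hgne : g ≠ 0 := (Real.sqrt_pos.mpr hDpos).ne'
  have hg2 : g ^ 2 = k₀ ^ 2 * c 2 ^ 2 := by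
    rw [hgdef, Real.sq_sqrt hDpos.le, hkey]
  have hsum : kstar.1 ^ 2 + kstar.2 ^ 2 = k₀ ^ 2 * (1 - c 2 ^ 2) := by
    rw [hx1, hx2]
    linear_combination (k₀ ^ 2 * (c 0 ^ 2 + c 1 ^ 2)) * hσ2 + k₀ ^ 2 * hnorm
  have hdet : H.det = 1 / ((c 2) ^ 2 * k₀ ^ 4) := by
    rw [Matrix.det_fin_two, h00, h11, h01, h10]
    have key : ∀ x1 x2 G : ℝ, G ≠ 0 →
        c 2 / k₀ * (1 / G + x1 ^ 2 / G ^ 3) * (c 2 / k₀ * (1 / G + x2 ^ 2 / G ^ 3))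
          - c 2 / k₀ * (x1 * x2 / G ^ 3) * (c 2 / k₀ * (x1 * x2 / G ^ 3))
        = c 2 ^ 2 / k₀ ^ 2 * (1 / G ^ 2 + (x1 ^ 2 + x2 ^ 2) / (G ^ 2) ^ 2) := by
      intro x1 x2 G hG
      field_simp
      ring
    rw [key kstar.1 kstar.2 g hgne, hsum, hg2]
    field_simp
    ring
  refine ⟨hdet, ?_⟩
  rw [hdet]
  positivity
end

section
/- Let σ > 0 and let Q be a nonzero real number. Then the complex-valued integral ∫_ℝ ( 1/σ³ − ζ²/(2σ⁵) ) · exp( −( ζ/(2σ) − i/Q )² ) dζ = 4√π / (σ² Q²). -/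
open MeasureTheory Complex Real Filter

/-- Integrability of `x ↦ x^n * cexp(-(a:ℂ)*x^2 + c*x + d)` for `0 < a`, `c` purely
imaginary. -/
lemma integrable_pow_mul_cexp_aux (n : ℕ) (a : ℝ) (ha : 0 < a) (c d : ℂ)
    (hc : c.re = 0) :
    Integrable fun x : ℝ => (x : ℂ) ^ n * Complex.exp (-(a : ℂ) * x ^ 2 + c * x + d) := by
  have hcont : Continuous fun x : ℝ => (x : ℂ) ^ n *
      Complex.exp (-(a : ℂ) * x ^ 2 + c * x + d) := by
    fun_prop
  have hg : Integrable fun x : ℝ => |x| ^ n * Real.exp (-a * x ^ 2) * Real.exp d.re := by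
    apply Integrable.mul_const
    have := integrable_rpow_mul_exp_neg_mul_sq ha (s := n)
      (by have := Nat.cast_nonneg (α := ℝ) n; linarith)
    have h2 : Integrable fun x : ℝ => x ^ n * Real.exp (-a * x ^ 2) := by
      simpa [Real.rpow_natCast] using this
    have := h2.abs
    apply this.congr
    filter_upwards with x
    rw [abs_mul, _root_.abs_pow, _root_.abs_of_pos (Real.exp_pos _)]
  refine hg.mono' hcont.aestronglyMeasurable ?_
  filter_upwards with x
  have hre : (-(a : ℂ) * x ^ 2 + c * x + d).re = -a * x ^ 2 + d.re := by
    simp [Complex.add_re, Complex.mul_re, hc, ← Complex.ofReal_pow]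
  apply le_of_eq
  simp only [norm_mul, norm_pow, Complex.norm_exp, hre,
    Real.exp_add, Complex.norm_real, Real.norm_eq_abs]
  ring

/-- The complex Gaussian moment integral from Lemma on the integral approximation:
`∫ (1/σ³ − ζ²/(2σ⁵)) exp(−(ζ/(2σ) − i/Q)²) dζ = 4√π/(σ²Q²)`. -/
theorem complex_gaussian_moment_integral
    (σ Q : ℝ) (hσ : 0 < σ) (hQ : Q ≠ 0) :
    (∫ ζ : ℝ, (((1 / σ ^ 3 - ζ ^ 2 / (2 * σ ^ 5) : ℝ)) : ℂ) *
        Complex.exp (-((ζ : ℂ) / (2 * (σ : ℂ)) - Complex.I / (Q : ℂ)) ^ 2)) =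
      ((4 * Real.sqrt Real.pi / (σ ^ 2 * Q ^ 2) : ℝ) : ℂ) := by
  have hσ0 : (σ : ℂ) ≠ 0 := by exact_mod_cast hσ.ne'
  have hQ0 : (Q : ℂ) ≠ 0 := by exact_mod_cast hQ
  set a : ℝ := 1 / (4 * σ ^ 2) with ha_def
  have ha : 0 < a := by positivity
  set b : ℂ := -(a : ℂ) with hb_def
  set c : ℂ := Complex.I * ((1 / (σ * Q) : ℝ) : ℂ) with hc_def
  set d : ℂ := ((1 / Q ^ 2 : ℝ) : ℂ) with hd_def
  have hcre : c.re = 0 := by simp [hc_def]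
  have hbre : b.re < 0 := by simp [hb_def]; positivity
  -- rewrite the exponent as a quadratic
  have hexp : ∀ ζ : ℝ, -((ζ : ℂ) / (2 * (σ : ℂ)) - Complex.I / (Q : ℂ)) ^ 2
      = b * ζ ^ 2 + c * ζ + d := by
    intro ζ
    simp only [hb_def, hc_def, hd_def, ha_def]
    push_cast
    ring_nf
    simp only [Complex.I_sq]
    field_simp
    ring
  set E : ℝ → ℂ := fun ζ => Complex.exp (b * ζ ^ 2 + c * ζ + d) with hE_def
  have hEeq : ∀ ζ : ℝ, E ζ = Complex.exp (-(a : ℂ) * ζ ^ 2 + c * ζ + d) := by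
    intro ζ; simp [hE_def, hb_def]
  -- integrability of the moments
  have I0 : Integrable E := by
    apply (integrable_pow_mul_cexp_aux 0 a ha c d hcre).congr
    filter_upwards with ζ; rw [hEeq ζ]; simp
  have I1 : Integrable fun ζ : ℝ => (ζ : ℂ) * E ζ := by
    apply (integrable_pow_mul_cexp_aux 1 a ha c d hcre).congr
    filter_upwards with ζ; rw [hEeq ζ]; simp
  have I2 : Integrable fun ζ : ℝ => (ζ : ℂ) ^ 2 * E ζ := by
    apply (integrable_pow_mul_cexp_aux 2 a ha c d hcre).congr
    filter_upwards with ζ; rw [hEeq ζ]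
  set k : ℂ := ((1 / σ ^ 3 : ℝ) : ℂ) with hk_def
  set m : ℂ := 2 * Complex.I / ((σ : ℂ) ^ 2 * Q) with hm_def
  set K : ℂ := ((2 / (σ ^ 3 * Q ^ 2) : ℝ) : ℂ) with hK_def
  set f : ℝ → ℂ := fun ζ => (k * ζ + m) * E ζ with hf_def
  set f' : ℝ → ℂ := fun ζ => k * E ζ + (k * ζ + m) * (E ζ * (2 * b * ζ + c)) with hf'_def
  have hderiv : ∀ ζ : ℝ, HasDerivAt f (f' ζ) ζ := by
    intro ζ
    have h1 : HasDerivAt (fun z : ℂ => b * z ^ 2 + c * z + d) (2 * b * ζ + c) (ζ : ℂ) := by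
      have := (((hasDerivAt_pow 2 (ζ : ℂ)).const_mul b).add
        ((hasDerivAt_id (ζ : ℂ)).const_mul c)).add_const d
      simpa [mul_comm, mul_assoc] using this
    have h2 : HasDerivAt (fun ζ : ℝ => E ζ) (E ζ * (2 * b * ζ + c)) ζ :=
      (h1.cexp).comp_ofReal
    have h3 : HasDerivAt (fun ζ : ℝ => k * (ζ : ℂ) + m) k ζ := by
      simpa using ((Complex.ofRealCLM.hasDerivAt (x := ζ)).const_mul k).add_const m
    exact h3.mul h2
  have hfint : Integrable f := by
    apply ((I1.const_mul k).add (I0.const_mul m)).congr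
    filter_upwards with ζ; simp [hf_def]; ring
  have hf'int : Integrable f' := by
    apply (((I0.const_mul (k + m * c)).add (I1.const_mul (2 * b * m + k * c))).add
      (I2.const_mul (2 * b * k))).congr
    filter_upwards with ζ; simp [hf'_def]; ring
  have hzero : ∫ ζ : ℝ, f' ζ = 0 :=
    integral_eq_zero_of_hasDerivAt_of_integrable hderiv hf'int hfint
  -- the key pointwise identity
  have hkey : ∀ ζ : ℝ,
      (((1 / σ ^ 3 - ζ ^ 2 / (2 * σ ^ 5) : ℝ)) : ℂ) *
        Complex.exp (-((ζ : ℂ) / (2 * (σ : ℂ)) - Complex.I / (Q : ℂ)) ^ 2)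
      = f' ζ + K * E ζ := by
    intro ζ
    rw [hexp ζ]
    simp only [hf'_def, hE_def]
    have : (((1 / σ ^ 3 - ζ ^ 2 / (2 * σ ^ 5) : ℝ)) : ℂ)
        = k + (k * ζ + m) * (2 * b * ζ + c) + K := by
      simp only [hk_def, hm_def, hK_def, hb_def, hc_def, ha_def]
      push_cast
      ring_nf
      simp only [Complex.I_sq]
      field_simp
      ring
    rw [this]; ring
  rw [integral_congr_ae (Filter.Eventually.of_forall hkey),
    integral_add hf'int (I0.const_mul K), hzero, zero_add, MeasureTheory.integral_const_mul]
  -- compute the Gaussian integral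
  have hgauss : ∫ ζ : ℝ, E ζ = ((2 * σ * Real.sqrt Real.pi : ℝ) : ℂ) := by
    rw [show (fun ζ : ℝ => E ζ) = fun ζ : ℝ => Complex.exp (b * ζ ^ 2 + c * ζ + d)
      from rfl, integral_cexp_quadratic hbre c d]
    have h1 : d - c ^ 2 / (4 * b) = 0 := by
      simp only [hd_def, hc_def, hb_def, ha_def]
      push_cast
      ring_nf
      simp only [Complex.I_sq]
      field_simp
      ring
    have h2 : (↑Real.pi / -b : ℂ) = (((2 * σ) ^ 2 * Real.pi : ℝ) : ℂ) := by
      simp only [hb_def, ha_def, neg_neg]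
      push_cast
      field_simp
      ring
    rw [h1, Complex.exp_zero, mul_one, h2]
    rw [show (1 / 2 : ℂ) = ((1 / 2 : ℝ) : ℂ) by norm_num,
      ← Complex.ofReal_cpow (by positivity)]
    congr 1
    rw [← Real.sqrt_eq_rpow ((2 * σ) ^ 2 * Real.pi)]
    rw [Real.sqrt_mul (by positivity), Real.sqrt_sq (by positivity)]
  rw [hgauss, hK_def]
  rw [← Complex.ofReal_mul]
  congr 1
  field_simp
  ring
end

section
/- Let K ∈ ℂ, σ > 0, and Θ₀, κ ∈ ℝ. Let k_min < k_max be real numbers and set k̄ = (k_max + k_min)/2 and δ = (k_max − k_min)/2. Then (1/√(2π)) ∫_{k_min}^{k_max} K k₀² e^{−k₀² σ²} cos(k₀ Θ₀) e^{−i k₀ κ} dk₀ = (K δ / (2π)) ∫_ℝ [ (2σ²)^{−3/2} − (2σ²)^{−1/2} ζ²/(4σ⁴) ] e^{−ζ²/(4σ²)} ( sinc(δ(κ − Θ₀ − ζ)) e^{−i k̄ (κ − Θ₀ − ζ)} + sinc(δ(κ + Θ₀ − ζ)) e^{−i k̄ (κ + Θ₀ − ζ)} ) dζ. -/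
open MeasureTheory Complex

/-- The unnormalized sinc function, `sinc x = sin x / x` for `x ≠ 0` and `sinc 0 = 1`. -/
noncomputable def sinc (x : ℝ) : ℝ := if x = 0 then 1 else Real.sin x / x

lemma lemA {kmin kmax : ℝ} (hkk : kmin < kmax) {kbar δ : ℝ}
    (hkbar : kbar = (kmax + kmin) / 2) (hδ : δ = (kmax - kmin) / 2) (a : ℝ) :
    ∫ k in kmin..kmax, Complex.exp (-Complex.I * ((k * a : ℝ) : ℂ)) =
      2 * (δ : ℂ) * ((sinc (δ * a) : ℝ) : ℂ) *
        Complex.exp (-Complex.I * ((kbar * a : ℝ) : ℂ)) := by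
  have hδ0 : (0:ℝ) < δ := by rw [hδ]; linarith
  rcases eq_or_ne a 0 with rfl | ha
  · simp [sinc, hδ]; ring
  · have ha' : (a:ℂ) ≠ 0 := Complex.ofReal_ne_zero.mpr ha
    have hc : -Complex.I * a ≠ 0 := by
      simp [Complex.I_ne_zero, Complex.ofReal_eq_zero, ha]
    have h1 : ∀ k : ℝ, Complex.exp (-Complex.I * ((k * a : ℝ) : ℂ)) =
        Complex.exp ((-Complex.I * a) * k) := by
      intro k; push_cast; ring_nf
    simp_rw [h1]
    rw [integral_exp_mul_complex hc]
    have hsinc : ((sinc (δ * a) : ℝ) : ℂ) = Complex.sin (δ * a) / (δ * a) := by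
      rw [sinc, if_neg (mul_ne_zero hδ0.ne' ha)]
      push_cast [Complex.ofReal_sin]
      ring
    have hmax : (kmax : ℂ) = (kbar : ℂ) + δ := by
      rw [hkbar, hδ]; push_cast; ring
    have hmin : (kmin : ℂ) = (kbar : ℂ) - δ := by
      rw [hkbar, hδ]; push_cast; ring
    rw [hsinc, hmax, hmin]
    rw [Complex.sin, mul_add, mul_sub, Complex.exp_add, Complex.exp_sub]
    have hδ' : (δ:ℂ) ≠ 0 := Complex.ofReal_ne_zero.mpr hδ0.ne'
    have e1 : (↑δ * ↑a * I : ℂ) = -(-I * ↑a * ↑δ) := by ring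
    have e2 : (-(↑δ * ↑a) * I : ℂ) = -I * ↑a * ↑δ := by ring
    rw [e1, e2]
    field_simp [Complex.exp_ne_zero, Complex.exp_neg]
    ring_nf
    rw [Complex.I_sq]
    ring
    rw [← Complex.exp_add, neg_add_cancel, Complex.exp_zero]

lemma int_pow_cexp {b : ℝ} (hb : b < 0) (t : ℝ) (n : ℕ) :
    Integrable fun x : ℝ ↦ (x:ℂ)^n * Complex.exp (b*x^2 + Complex.I*t*x) := by
  have h0 : (0:ℝ) < -b := by linarith
  have hn : (-1:ℝ) < n := lt_of_lt_of_le (by norm_num) (Nat.cast_nonneg n)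
  have hg : Integrable (fun x:ℝ => |x ^ ((n:ℝ)) * Real.exp (-(-b) * x^2)|) :=
    (integrable_rpow_mul_exp_neg_mul_sq h0 hn).abs
  refine hg.mono' ?_ (ae_of_all _ fun x => ?_)
  · apply Continuous.aestronglyMeasurable
    fun_prop
  · have hre : ((b:ℂ)*x^2 + Complex.I*t*x).re = b * x^2 := by
      simp [Complex.add_re, Complex.mul_re, ← Complex.ofReal_pow]
    rw [norm_mul, norm_pow, Complex.norm_real, Real.norm_eq_abs,
      Complex.norm_exp, hre, abs_mul, Real.rpow_natCast,
      _root_.abs_pow, abs_of_pos (Real.exp_pos _), neg_neg]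

lemma lemB {b : ℝ} (t : ℝ) (hb : b < 0) :
    ∫ x:ℝ, (x:ℂ)^2 * Complex.exp (b*x^2 + Complex.I*t*x) =
      ((Complex.I*t)^2/(4*(b:ℂ)^2) - 1/(2*(b:ℂ))) *
        ∫ x:ℝ, Complex.exp (b*x^2 + Complex.I*t*x) := by
  set c : ℂ := Complex.I*t with hc
  set B : ℂ := (b:ℂ) with hBdef
  have hB : B ≠ 0 := Complex.ofReal_ne_zero.mpr hb.ne
  set γ : ℂ := 1/(2*B) - c^2/(4*B^2) with hγ
  set f : ℝ → ℂ := fun x => ((x:ℂ)/(2*B) - c/(4*B^2)) * Complex.exp (B*x^2 + c*x) with hf_def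
  have hderiv : ∀ x : ℝ, HasDerivAt f (((x:ℂ)^2 + γ) * Complex.exp (B*x^2 + c*x)) x := by
    intro x
    have h1 : HasDerivAt (fun z:ℂ => z/(2*B) - c/(4*B^2)) (1/(2*B)) ((x:ℝ):ℂ) := by
      simpa using ((hasDerivAt_id ((x:ℝ):ℂ)).div_const (2*B)).sub_const (c/(4*B^2))
    have h2 : HasDerivAt (fun z:ℂ => B*z^2 + c*z) (2*B*x + c) ((x:ℝ):ℂ) := by
      have := ((hasDerivAt_pow 2 ((x:ℝ):ℂ)).const_mul B).add ((hasDerivAt_id ((x:ℝ):ℂ)).const_mul c)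
      exact this.congr_deriv (by rw [show (2:ℕ)-1 = 1 from rfl]; push_cast; ring)
    have h4 := (h1.mul h2.cexp).comp_ofReal
    have key : ((x:ℂ)^2 + γ) = 1/(2*B) + ((x:ℂ)/(2*B) - c/(4*B^2))*(2*B*x + c) := by
      rw [hγ]; field_simp; ring
    convert h4 using 1
    · rfl
    rw [key]; ring
  have h0 : Integrable (fun x:ℝ => Complex.exp (B*x^2 + c*x)) := by
    simpa using int_pow_cexp hb t 0
  have h2i : Integrable (fun x:ℝ => (x:ℂ)^2 * Complex.exp (B*x^2 + c*x)) :=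
    int_pow_cexp hb t 2
  have hf : Integrable f := by
    have : f = fun x:ℝ => (1/(2*B)) * ((x:ℂ)^1 * Complex.exp (B*x^2 + c*x)) -
        (c/(4*B^2)) * Complex.exp (B*x^2 + c*x) := funext fun x => by ring
    rw [this]
    exact ((int_pow_cexp hb t 1).const_mul _).sub (h0.const_mul _)
  have hf' : Integrable (fun x:ℝ => ((x:ℂ)^2 + γ) * Complex.exp (B*x^2 + c*x)) := by
    have : (fun x:ℝ => ((x:ℂ)^2 + γ) * Complex.exp (B*x^2 + c*x)) =
        fun x:ℝ => (x:ℂ)^2 * Complex.exp (B*x^2 + c*x) + γ * Complex.exp (B*x^2 + c*x) :=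
      funext fun x => by ring
    rw [this]
    exact h2i.add (h0.const_mul _)
  have hzero := integral_eq_zero_of_hasDerivAt_of_integrable hderiv hf' hf
  have hsplit : ∫ x:ℝ, ((x:ℂ)^2 + γ) * Complex.exp (B*x^2 + c*x) =
      (∫ x:ℝ, (x:ℂ)^2 * Complex.exp (B*x^2 + c*x)) +
        γ * ∫ x:ℝ, Complex.exp (B*x^2 + c*x) := by
    rw [← integral_const_mul, ← integral_add h2i (h0.const_mul _)]
    congr 1; funext x; ring
  rw [hsplit] at hzero
  have : ((Complex.I*t)^2/(4*(b:ℂ)^2) - 1/(2*(b:ℂ))) = -γ := by rw [hγ]; ring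
  rw [this]
  linear_combination hzero

lemma lemC {σ : ℝ} (hσ : 0 < σ) (k : ℝ) :
    (∫ ζ : ℝ, (((2*σ^2)^(-(3:ℝ)/2) - (2*σ^2)^(-(1:ℝ)/2) * ζ^2/(4*σ^4) : ℝ) : ℂ) *
      ((Real.exp (-ζ^2/(4*σ^2)) : ℝ) : ℂ) * Complex.exp (Complex.I*(k:ℂ)*(ζ:ℂ))) =
    ((Real.sqrt (2*Real.pi) : ℝ) : ℂ) * (k:ℂ)^2 * Complex.exp (-((k^2*σ^2 : ℝ):ℂ)) := by
  have hσ2 : (0:ℝ) < σ^2 := by positivity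
  set u : ℝ := 2*σ^2 with hu
  have hu0 : 0 < u := by positivity
  set b : ℝ := -(1/(4*σ^2)) with hbdef
  have hb : b < 0 := by
    have : (0:ℝ) < 1/(4*σ^2) := by positivity
    rw [hbdef]; linarith
  -- pointwise rewrite of the integrand
  have hexp : ∀ ζ : ℝ, Complex.exp ((b:ℂ)*ζ^2 + Complex.I*(k:ℂ)*ζ) =
      ((Real.exp (-ζ^2/(4*σ^2)) : ℝ):ℂ) * Complex.exp (Complex.I*(k:ℂ)*(ζ:ℂ)) := by
    intro ζ
    rw [Complex.exp_add, Complex.ofReal_exp]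
    congr 2
    rw [hbdef]; push_cast
    field_simp
  have hpt : ∀ ζ : ℝ, (((2*σ^2)^(-(3:ℝ)/2) - (2*σ^2)^(-(1:ℝ)/2) * ζ^2/(4*σ^4) : ℝ) : ℂ) *
      ((Real.exp (-ζ^2/(4*σ^2)) : ℝ) : ℂ) * Complex.exp (Complex.I*(k:ℂ)*(ζ:ℂ))
      = ((u^(-(3:ℝ)/2) : ℝ):ℂ) * Complex.exp ((b:ℂ)*ζ^2 + Complex.I*(k:ℂ)*ζ)
        - ((u^(-(1:ℝ)/2)/(4*σ^4) : ℝ):ℂ) *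
            ((ζ:ℂ)^2 * Complex.exp ((b:ℂ)*ζ^2 + Complex.I*(k:ℂ)*ζ)) := by
    intro ζ
    rw [hexp ζ]; push_cast; ring
  simp only [hu, hpt]
  have h0 : Integrable (fun ζ:ℝ => Complex.exp ((b:ℂ)*ζ^2 + Complex.I*(k:ℂ)*ζ)) := by
    simpa using int_pow_cexp hb k 0
  have h2 : Integrable (fun ζ:ℝ => (ζ:ℂ)^2 * Complex.exp ((b:ℂ)*ζ^2 + Complex.I*(k:ℂ)*ζ)) :=
    int_pow_cexp hb k 2
  rw [integral_sub (h0.const_mul _) (h2.const_mul _), integral_const_mul, integral_const_mul,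
    lemB k hb]
  -- the Gaussian integral
  have hbre : ((b:ℂ)).re < 0 := by simpa using hb
  have hquad : ∫ ζ:ℝ, Complex.exp ((b:ℂ)*ζ^2 + Complex.I*(k:ℂ)*ζ) =
      (Real.sqrt (Real.pi/(-b)) : ℂ) * Complex.exp (-((k^2*σ^2 : ℝ):ℂ)) := by
    have := integral_cexp_quadratic hbre (Complex.I*(k:ℂ)) 0
    simp only [add_zero] at this
    rw [this]
    congr 1
    · rw [Real.sqrt_eq_rpow, Complex.ofReal_cpow (div_nonneg Real.pi_pos.le (by linarith : (0:ℝ) ≤ -b)) (1/2)]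
      norm_num
    · congr 1
      rw [hbdef]; push_cast
      rw [mul_pow, Complex.I_sq]
      field_simp
      ring
  rw [hquad]
  have hM : ((Complex.I*(k:ℂ))^2/(4*(b:ℂ)^2) - 1/(2*(b:ℂ))) = (((2*σ^2 - 4*σ^4*k^2) : ℝ) : ℂ) := by
    rw [mul_pow, Complex.I_sq, hbdef]; push_cast; field_simp; ring
  rw [hM]
  have hs0 : Real.sqrt u ≠ 0 := (Real.sqrt_pos.mpr hu0).ne'
  have e1 : u ^ (-(3:ℝ)/2) = u ^ (-(1:ℝ)/2) * u ^ (-1:ℝ) := by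
    rw [← Real.rpow_add hu0]; norm_num
  have e2 : u ^ (-(1:ℝ)/2) = (Real.sqrt u)⁻¹ := by
    rw [show -(1:ℝ)/2 = -(1/2:ℝ) by norm_num, Real.rpow_neg hu0.le, ← Real.sqrt_eq_rpow]
  have hπb : Real.pi/(-b) = 2*Real.pi*u := by
    rw [hbdef, hu]; field_simp; ring
  have key : (u^(-(3:ℝ)/2) * Real.sqrt (Real.pi/(-b)) -
      (u^(-(1:ℝ)/2)/(4*σ^4)) * ((2*σ^2-4*σ^4*k^2) * Real.sqrt (Real.pi/(-b))))
      = Real.sqrt (2*Real.pi) * k^2 := by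
    rw [hπb, e1, e2, Real.rpow_neg_one,
      show 2*Real.pi*u = (2*Real.pi)*u by ring,
      Real.sqrt_mul (by positivity : (0:ℝ) ≤ 2*Real.pi)]
    have hss : Real.sqrt u * Real.sqrt u = u := Real.mul_self_sqrt hu0.le
    field_simp [hu]
    nlinarith [hss, Real.sq_sqrt hu0.le, Real.sqrt_nonneg (2*Real.pi)]
  calc ((u^(-(3:ℝ)/2) : ℝ):ℂ) * ((Real.sqrt (Real.pi/(-b)) : ℂ) * Complex.exp (-((k^2*σ^2 : ℝ):ℂ)))
        - ((u^(-(1:ℝ)/2)/(4*σ^4) : ℝ):ℂ) * ((((2*σ^2 - 4*σ^4*k^2) : ℝ) : ℂ) *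
          ((Real.sqrt (Real.pi/(-b)) : ℂ) * Complex.exp (-((k^2*σ^2 : ℝ):ℂ))))
      = (((u^(-(3:ℝ)/2) * Real.sqrt (Real.pi/(-b)) -
          (u^(-(1:ℝ)/2)/(4*σ^4)) * ((2*σ^2-4*σ^4*k^2) * Real.sqrt (Real.pi/(-b)))) : ℝ) : ℂ) *
          Complex.exp (-((k^2*σ^2 : ℝ):ℂ)) := by push_cast; ring
    _ = ((Real.sqrt (2*Real.pi) : ℝ) : ℂ) * (k:ℂ)^2 * Complex.exp (-((k^2*σ^2 : ℝ):ℂ)) := by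
          rw [key]; push_cast; ring

/-- The band-limited Fourier transform of the measurement function
`M(k₀) = K k₀² e^{−k₀²σ²} cos(k₀Θ₀)` can be written as a convolution of a Gaussian-type
kernel with shifted sinc functions. -/
theorem measurement_fourier_convolution
    (K : ℂ) (σ : ℝ) (hσ : 0 < σ) (Θ₀ κ : ℝ)
    (kmin kmax : ℝ) (hkk : kmin < kmax)
    (kbar δ : ℝ) (hkbar : kbar = (kmax + kmin) / 2) (hδ : δ = (kmax - kmin) / 2) :
    ((1 / Real.sqrt (2 * Real.pi) : ℝ) : ℂ) *
      (∫ k₀ in kmin..kmax, K * (k₀ : ℂ) ^ 2 *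
        Complex.exp (-((k₀ ^ 2 * σ ^ 2 : ℝ) : ℂ)) * ((Real.cos (k₀ * Θ₀) : ℝ) : ℂ) *
        Complex.exp (-Complex.I * ((k₀ * κ : ℝ) : ℂ))) =
    (K * (δ : ℂ) / (2 * (Real.pi : ℂ))) *
      ∫ ζ : ℝ,
        (((2 * σ ^ 2) ^ (-(3 : ℝ) / 2) -
            (2 * σ ^ 2) ^ (-(1 : ℝ) / 2) * ζ ^ 2 / (4 * σ ^ 4) : ℝ) : ℂ) *
        ((Real.exp (-ζ ^ 2 / (4 * σ ^ 2)) : ℝ) : ℂ) *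
        (((sinc (δ * (κ - Θ₀ - ζ)) : ℝ) : ℂ) *
            Complex.exp (-Complex.I * ((kbar * (κ - Θ₀ - ζ) : ℝ) : ℂ)) +
          ((sinc (δ * (κ + Θ₀ - ζ)) : ℝ) : ℂ) *
            Complex.exp (-Complex.I * ((kbar * (κ + Θ₀ - ζ) : ℝ) : ℂ))) := by
  have hδ0 : (0:ℝ) < δ := by rw [hδ]; linarith
  set s : ℝ := Real.sqrt (2 * Real.pi) with hs
  have hs0 : (0:ℝ) < s := Real.sqrt_pos.mpr (by positivity)
  -- the real Gaussian-type kernel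
  set B : ℝ → ℝ := fun ζ => ((2 * σ ^ 2) ^ (-(3 : ℝ) / 2) -
      (2 * σ ^ 2) ^ (-(1 : ℝ) / 2) * ζ ^ 2 / (4 * σ ^ 4)) * Real.exp (-ζ ^ 2 / (4 * σ ^ 2))
    with hB
  have hβ : (0:ℝ) < 1/(4*σ^2) := by positivity
  have hBint : Integrable B := by
    have h1 : Integrable (fun ζ:ℝ => Real.exp (-(1/(4*σ^2)) * ζ^2)) :=
      integrable_exp_neg_mul_sq hβ
    have h2 : Integrable (fun ζ:ℝ => ζ^2 * Real.exp (-(1/(4*σ^2)) * ζ^2)) := by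
      have := integrable_rpow_mul_exp_neg_mul_sq hβ (by norm_num : (-1:ℝ) < 2)
      simpa [Real.rpow_two] using this
    have : B = fun ζ:ℝ => (2 * σ ^ 2) ^ (-(3 : ℝ) / 2) * Real.exp (-(1/(4*σ^2)) * ζ^2)
        - ((2 * σ ^ 2) ^ (-(1 : ℝ) / 2) / (4 * σ ^ 4)) *
          (ζ^2 * Real.exp (-(1/(4*σ^2)) * ζ^2)) := by
      funext ζ
      simp only [hB]
      have : -ζ ^ 2 / (4 * σ ^ 2) = -(1/(4*σ^2)) * ζ^2 := by field_simp
      rw [this]; ring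
    rw [this]
    exact (h1.const_mul _).sub (h2.const_mul _)
  have hBcont : Continuous B := by
    apply Continuous.mul
    · fun_prop
    · exact Real.continuous_exp.comp (by fun_prop)
  -- step 1: pointwise, multiply by 2δ and use lemA
  have hexpInt : ∀ a : ℝ, IntervalIntegrable
      (fun k:ℝ => Complex.exp (-Complex.I * ((k * a : ℝ) : ℂ))) volume kmin kmax := by
    intro a
    apply Continuous.intervalIntegrable
    fun_prop
  have step1 : ∀ ζ : ℝ, (2*(δ:ℂ)) * ((B ζ : ℝ) : ℂ) *
      (((sinc (δ * (κ - Θ₀ - ζ)) : ℝ) : ℂ) *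
            Complex.exp (-Complex.I * ((kbar * (κ - Θ₀ - ζ) : ℝ) : ℂ)) +
          ((sinc (δ * (κ + Θ₀ - ζ)) : ℝ) : ℂ) *
            Complex.exp (-Complex.I * ((kbar * (κ + Θ₀ - ζ) : ℝ) : ℂ)))
      = ((B ζ : ℝ) : ℂ) * ∫ k in Set.Ioc kmin kmax,
          (Complex.exp (-Complex.I * ((k * (κ - Θ₀ - ζ) : ℝ) : ℂ)) +
            Complex.exp (-Complex.I * ((k * (κ + Θ₀ - ζ) : ℝ) : ℂ))) := by
    intro ζ
    have := intervalIntegral.integral_add (hexpInt (κ - Θ₀ - ζ)) (hexpInt (κ + Θ₀ - ζ))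
    rw [intervalIntegral.integral_of_le hkk.le] at this
    rw [this, lemA hkk hkbar hδ (κ - Θ₀ - ζ), lemA hkk hkbar hδ (κ + Θ₀ - ζ)]
    ring
  -- the double integral, swapped
  set G : ℝ → ℝ → ℂ := fun ζ k => ((B ζ : ℝ) : ℂ) *
      (Complex.exp (-Complex.I * ((k * (κ - Θ₀ - ζ) : ℝ) : ℂ)) +
        Complex.exp (-Complex.I * ((k * (κ + Θ₀ - ζ) : ℝ) : ℂ))) with hG
  have hGint : Integrable (Function.uncurry G)
      (volume.prod (volume.restrict (Set.Ioc kmin kmax))) := by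
    have hdom : Integrable (fun p : ℝ × ℝ => |B p.1| * 2)
        (volume.prod (volume.restrict (Set.Ioc kmin kmax))) :=
      hBint.abs.mul_prod ((integrableOn_const_iff).mpr (Or.inr measure_Ioc_lt_top))
    refine hdom.mono' ?_ (ae_of_all _ fun p => ?_)
    · apply Continuous.aestronglyMeasurable
      apply Continuous.mul
      · fun_prop
      · apply Continuous.add
        all_goals
          apply Complex.continuous_exp.comp
          fun_prop
    · simp only [Function.uncurry, hG, norm_mul]
      have h1 : ∀ r : ℝ, ‖Complex.exp (-Complex.I * (r : ℂ))‖ = 1 := by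
        intro r
        rw [Complex.norm_exp]
        simp
      calc ‖((B p.1 : ℝ) : ℂ)‖ * ‖Complex.exp (-Complex.I * ((p.2 * (κ - Θ₀ - p.1) : ℝ) : ℂ)) +
            Complex.exp (-Complex.I * ((p.2 * (κ + Θ₀ - p.1) : ℝ) : ℂ))‖
          ≤ ‖((B p.1 : ℝ) : ℂ)‖ * (‖Complex.exp (-Complex.I * ((p.2 * (κ - Θ₀ - p.1) : ℝ) : ℂ))‖ +
            ‖Complex.exp (-Complex.I * ((p.2 * (κ + Θ₀ - p.1) : ℝ) : ℂ))‖) :=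
            mul_le_mul_of_nonneg_left (norm_add_le _ _) (norm_nonneg _)
        _ = |B p.1| * 2 := by rw [h1, h1, Complex.norm_real, Real.norm_eq_abs]; ring
  have hswap : ∫ ζ : ℝ, ∫ k in Set.Ioc kmin kmax, G ζ k
      = ∫ k in Set.Ioc kmin kmax, ∫ ζ : ℝ, G ζ k := integral_integral_swap hGint
  -- inner integral via lemC
  have hinner : ∀ k : ℝ, (∫ ζ : ℝ, G ζ k) =
      (Complex.exp (-Complex.I * ((k * (κ - Θ₀) : ℝ) : ℂ)) +
        Complex.exp (-Complex.I * ((k * (κ + Θ₀) : ℝ) : ℂ))) *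
        (((Real.sqrt (2*Real.pi) : ℝ) : ℂ) * (k:ℂ)^2 *
          Complex.exp (-((k^2*σ^2 : ℝ):ℂ))) := by
    intro k
    have hGsplit : ∀ ζ : ℝ, G ζ k =
        (Complex.exp (-Complex.I * ((k * (κ - Θ₀) : ℝ) : ℂ)) +
          Complex.exp (-Complex.I * ((k * (κ + Θ₀) : ℝ) : ℂ))) *
          ((((2 * σ ^ 2) ^ (-(3 : ℝ) / 2) -
            (2 * σ ^ 2) ^ (-(1 : ℝ) / 2) * ζ ^ 2 / (4 * σ ^ 4) : ℝ) : ℂ) *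
            ((Real.exp (-ζ ^ 2 / (4 * σ ^ 2)) : ℝ) : ℂ) *
            Complex.exp (Complex.I*(k:ℂ)*(ζ:ℂ))) := by
      intro ζ
      simp only [hG, hB]
      have e1 : (-Complex.I * ((k * (κ - Θ₀ - ζ) : ℝ) : ℂ)) =
          (-Complex.I * ((k * (κ - Θ₀) : ℝ) : ℂ)) + Complex.I*(k:ℂ)*(ζ:ℂ) := by
        push_cast; ring
      have e2 : (-Complex.I * ((k * (κ + Θ₀ - ζ) : ℝ) : ℂ)) =
          (-Complex.I * ((k * (κ + Θ₀) : ℝ) : ℂ)) + Complex.I*(k:ℂ)*(ζ:ℂ) := by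
        push_cast; ring
      rw [e1, e2, Complex.exp_add, Complex.exp_add]
      push_cast
      ring
    simp_rw [hGsplit]
    rw [integral_const_mul, lemC hσ k]
  -- put it together
  rw [intervalIntegral.integral_of_le hkk.le]
  have hKout : ∫ k₀ in Set.Ioc kmin kmax, K * (k₀ : ℂ) ^ 2 *
        Complex.exp (-((k₀ ^ 2 * σ ^ 2 : ℝ) : ℂ)) * ((Real.cos (k₀ * Θ₀) : ℝ) : ℂ) *
        Complex.exp (-Complex.I * ((k₀ * κ : ℝ) : ℂ))
      = K * ∫ k₀ in Set.Ioc kmin kmax, (k₀ : ℂ) ^ 2 *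
        Complex.exp (-((k₀ ^ 2 * σ ^ 2 : ℝ) : ℂ)) * ((Real.cos (k₀ * Θ₀) : ℝ) : ℂ) *
        Complex.exp (-Complex.I * ((k₀ * κ : ℝ) : ℂ)) := by
    rw [← integral_const_mul]
    congr 1; funext k; ring
  rw [hKout]
  set M : ℂ := ∫ k₀ in Set.Ioc kmin kmax, (k₀ : ℂ) ^ 2 *
        Complex.exp (-((k₀ ^ 2 * σ ^ 2 : ℝ) : ℂ)) * ((Real.cos (k₀ * Θ₀) : ℝ) : ℂ) *
        Complex.exp (-Complex.I * ((k₀ * κ : ℝ) : ℂ)) with hM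
  set J : ℂ := ∫ ζ : ℝ,
        (((2 * σ ^ 2) ^ (-(3 : ℝ) / 2) -
            (2 * σ ^ 2) ^ (-(1 : ℝ) / 2) * ζ ^ 2 / (4 * σ ^ 4) : ℝ) : ℂ) *
        ((Real.exp (-ζ ^ 2 / (4 * σ ^ 2)) : ℝ) : ℂ) *
        (((sinc (δ * (κ - Θ₀ - ζ)) : ℝ) : ℂ) *
            Complex.exp (-Complex.I * ((kbar * (κ - Θ₀ - ζ) : ℝ) : ℂ)) +
          ((sinc (δ * (κ + Θ₀ - ζ)) : ℝ) : ℂ) *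
            Complex.exp (-Complex.I * ((kbar * (κ + Θ₀ - ζ) : ℝ) : ℂ))) with hJ
  -- 2δ J = 2 s M
  have key : (2*(δ:ℂ)) * J = 2 * (s:ℂ) * M := by
    have e0 : (2*(δ:ℂ)) * J = ∫ ζ : ℝ, ∫ k in Set.Ioc kmin kmax, G ζ k := by
      rw [hJ, ← integral_const_mul]
      congr 1; funext ζ
      simp only [hG]
      rw [integral_const_mul, ← step1 ζ]
      simp only [hB]
      push_cast
      ring
    rw [e0, hswap]
    have e1 : ∀ k : ℝ, (∫ ζ : ℝ, G ζ k) = 2 * (s:ℂ) *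
        ((k : ℂ) ^ 2 * Complex.exp (-((k ^ 2 * σ ^ 2 : ℝ) : ℂ)) *
          ((Real.cos (k * Θ₀) : ℝ) : ℂ) * Complex.exp (-Complex.I * ((k * κ : ℝ) : ℂ))) := by
      intro k
      rw [hinner k]
      have hcos : Complex.exp (-Complex.I * ((k * (κ - Θ₀) : ℝ) : ℂ)) +
          Complex.exp (-Complex.I * ((k * (κ + Θ₀) : ℝ) : ℂ)) =
          2 * ((Real.cos (k * Θ₀) : ℝ) : ℂ) * Complex.exp (-Complex.I * ((k * κ : ℝ) : ℂ)) := by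
        have f1 : (-Complex.I * ((k * (κ - Θ₀) : ℝ) : ℂ)) =
            ((k * Θ₀ : ℝ):ℂ) * Complex.I + -Complex.I * ((k * κ : ℝ) : ℂ) := by
          push_cast; ring
        have f2 : (-Complex.I * ((k * (κ + Θ₀) : ℝ) : ℂ)) =
            -(((k * Θ₀ : ℝ):ℂ)) * Complex.I + -Complex.I * ((k * κ : ℝ) : ℂ) := by
          push_cast; ring
        rw [f1, f2, Complex.exp_add, Complex.exp_add, Complex.ofReal_cos, Complex.cos]
        ring
      rw [hcos]
      have : (k^2*σ^2 : ℝ) = (k^2*σ^2 : ℝ) := rfl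
      push_cast
      ring
    calc ∫ k in Set.Ioc kmin kmax, ∫ ζ : ℝ, G ζ k
        = ∫ k in Set.Ioc kmin kmax, 2 * (s:ℂ) *
            ((k : ℂ) ^ 2 * Complex.exp (-((k ^ 2 * σ ^ 2 : ℝ) : ℂ)) *
              ((Real.cos (k * Θ₀) : ℝ) : ℂ) *
              Complex.exp (-Complex.I * ((k * κ : ℝ) : ℂ))) := by
          apply integral_congr_ae
          exact ae_of_all _ fun k => e1 k
      _ = 2 * (s:ℂ) * M := by rw [integral_const_mul, hM]
  -- final algebra
  have hsC : (s:ℂ) ≠ 0 := Complex.ofReal_ne_zero.mpr hs0.ne'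
  have hδC : (δ:ℂ) ≠ 0 := Complex.ofReal_ne_zero.mpr hδ0.ne'
  have hπC : (2*(Real.pi:ℂ)) ≠ 0 := by
    simp [Real.pi_ne_zero]
  have hsq : (s:ℂ) * (s:ℂ) = 2*(Real.pi:ℂ) := by
    rw [hs, ← Complex.ofReal_mul, Real.mul_self_sqrt (by positivity)]
    push_cast; ring
  have hcast : ((1 / Real.sqrt (2 * Real.pi) : ℝ) : ℂ) = 1 / (s:ℂ) := by
    rw [hs]; push_cast; ring
  rw [hcast]
  rw [← hsq]
  field_simp
  linear_combination (-(K/2)) * key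
end
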